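/- arXiv:2210.06055 — 5 statements merged into one kernel-verified Lean document; each statement's English description precedes it below -/
import Mathlib

section
/- Define the tree height function H : ℕ → ℕ recursively by H(1) = 0 and, for n > 1 with prime factorization n = p₁^{α₁} ⋯ p_k^{α_k}, H(n) = 1 + max over i of H(αᵢ). Then for every m ≥ 0, the smallest natural number n with H(n) = m is 2↑↑m (the tetration tower of 2's of height m, with 2↑↑0 = 1). -/
/-- Tetration base 2: `tet 0 = 1`, `tet (m+1) = 2 ^ tet m`. -/
def tet : ℕ → ℕ
  | 0 => 1
  | m + 1 => 2 ^ tet m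

/-- Height of the super-factorization tree of `n`:
`H 1 = 0` and `H n = 1 + max_{p^α ∥ n} H α` for `n > 1`. -/
def H : ℕ → ℕ
  | n =>
    if h : n ≤ 1 then 0
    else 1 + (n.primeFactors.attach.sup fun p => H (n.factorization p.1))
decreasing_by
  exact Nat.factorization_lt _ (by omega)

lemma H_of_le_one {n : ℕ} (hn : n ≤ 1) : H n = 0 := by
  rw [H, dif_pos hn]

lemma H_of_gt_one {n : ℕ} (hn : 1 < n) :
    H n = 1 + (n.primeFactors.attach.sup fun p => H (n.factorization p.1)) := by
  rw [H, dif_neg (by omega)]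

lemma tet_pos (m : ℕ) : 1 ≤ tet m := by
  induction m with
  | zero => simp [tet]
  | succ k ih => simp only [tet]; exact Nat.one_le_two_pow

lemma H_two_pow {k : ℕ} (hk : 1 ≤ k) : H (2 ^ k) = 1 + H k := by
  have hgt : 1 < 2 ^ k := by
    calc 1 < 2 := one_lt_two
    _ ≤ 2 ^ k := Nat.le_self_pow (by omega) 2
  rw [H_of_gt_one hgt]
  have : ((2 ^ k).primeFactors.attach.sup fun p => H ((2 ^ k).factorization p.1))
      = (2 ^ k).primeFactors.sup fun q => H ((2 ^ k).factorization q) :=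
    Finset.sup_attach (2 ^ k).primeFactors (fun q => H ((2 ^ k).factorization q))
  rw [this, Nat.primeFactors_prime_pow (by omega) Nat.prime_two,
    Finset.sup_singleton, Nat.Prime.factorization_pow Nat.prime_two]
  simp

lemma H_tet (m : ℕ) : H (tet m) = m := by
  induction m with
  | zero => simp [tet, H_of_le_one]
  | succ k ih =>
    show H (2 ^ tet k) = k + 1
    rw [H_two_pow (tet_pos k), ih, Nat.add_comm]

lemma tet_H_le (n : ℕ) (hn : 1 ≤ n) : tet (H n) ≤ n := by
  induction n using Nat.strong_induction_on with
  | _ n ih =>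
    rcases eq_or_lt_of_le hn with h1 | h1
    · rw [← h1, H_of_le_one le_rfl]; simp [tet]
    · rw [H_of_gt_one h1]
      have hne : (n.primeFactors.attach).Nonempty := by
        rw [Finset.attach_nonempty_iff]
        exact Nat.nonempty_primeFactors.mpr h1
      obtain ⟨p, hp, hsup⟩ := Finset.exists_mem_eq_sup _ hne
        (fun p => H (n.factorization p.1))
      set α := n.factorization p.1 with hα
      have hpmem : p.1 ∈ n.primeFactors := p.2
      have hpprime : p.1.Prime := Nat.prime_of_mem_primeFactors hpmem
      have hα1 : 1 ≤ α := by
        rw [hα]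
        exact (Nat.Prime.factorization_pos_of_dvd hpprime (by omega)
          (Nat.dvd_of_mem_primeFactors hpmem))
      have hαlt : α < n := Nat.factorization_lt _ (by omega)
      have ih1 : tet (H α) ≤ α := ih α hαlt hα1
      have hdvd : p.1 ^ α ∣ n := Nat.ordProj_dvd n p.1
      have h2p : 2 ≤ p.1 := hpprime.two_le
      calc tet (1 + _) = 2 ^ tet (H α) := by rw [Nat.add_comm, ← hsup]; rfl
        _ ≤ 2 ^ α := Nat.pow_le_pow_right (by omega) ih1
        _ ≤ p.1 ^ α := Nat.pow_le_pow_left h2p α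
        _ ≤ n := Nat.le_of_dvd (by omega) hdvd

theorem stmt2 (m : ℕ) : IsLeast {n : ℕ | 1 ≤ n ∧ H n = m} (tet m) := by
  constructor
  · exact ⟨tet_pos m, H_tet m⟩
  · rintro n ⟨hn1, hn2⟩
    have := tet_H_le n hn1
    rwa [hn2] at this
end

section
/- Let f_m(n) = 1 if H(n) ≤ m, else 0 (with f_0(α) = 1 iff α ∈ {0,1}), and define the multiplicative function 𝓕_m(n) = ∏_{p^α ∥ n} (f_{m-1}(α) − f_{m-1}(α−1)) for m ≥ 1. Then for all n ≥ 1 and m ≥ 1, the identity ∑_{d ∣ n} 𝓕_m(d) = f_m(n) holds. -/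
/-- `f m n` = 1 if `H n ≤ m`, else 0. -/
def f (m n : ℕ) : ℤ := if H n ≤ m then 1 else 0

/-- `F m n = ∏_{p^α ∥ n} (f (m-1) α - f (m-1) (α-1))`. -/
def F (m n : ℕ) : ℤ :=
  ∏ p ∈ n.primeFactors, (f (m - 1) (n.factorization p) - f (m - 1) (n.factorization p - 1))


lemma H_eq {n : ℕ} (h : 1 < n) :
    H n = 1 + n.primeFactors.sup fun p => H (n.factorization p) := by
  rw [H, dif_neg (by omega), Finset.sup_attach n.primeFactors (fun p => H (n.factorization p))]

lemma H_le_one {n : ℕ} (h : n ≤ 1) : H n = 0 := by rw [H, dif_pos h]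

lemma F_one (m : ℕ) : F m 1 = 1 := by simp [F]

lemma F_prime_pow {m p : ℕ} (hp : p.Prime) {k : ℕ} (hk : k ≠ 0) :
    F m (p ^ k) = f (m - 1) k - f (m - 1) (k - 1) := by
  rw [F, Nat.primeFactors_prime_pow hk hp, Finset.prod_singleton,
    hp.factorization_pow, Finsupp.single_eq_same]

lemma sum_F_prime_pow (m : ℕ) {p : ℕ} (hp : p.Prime) (k : ℕ) :
    ∑ d ∈ (p ^ k).divisors, F m d = f (m - 1) k := by
  rw [Nat.sum_divisors_prime_pow hp]
  induction k with
  | zero => simp [F_one, f, H_le_one]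
  | succ k ih =>
    rw [Finset.sum_range_succ, ih, F_prime_pow hp (Nat.succ_ne_zero k)]
    simp

lemma F_mul (m : ℕ) {a b : ℕ} (ha : a ≠ 0) (hb : b ≠ 0) (hab : Nat.Coprime a b) :
    F m (a * b) = F m a * F m b := by
  have hdisj := Nat.Coprime.disjoint_primeFactors hab
  have hU : (a * b).primeFactors = a.primeFactors ∪ b.primeFactors :=
    Nat.primeFactors_mul ha hb
  have hfa : ∀ p ∈ a.primeFactors, (a * b).factorization p = a.factorization p := by
    intro p hpa
    rw [Nat.factorization_mul ha hb]
    have : b.factorization p = 0 := by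
      have : p ∉ b.primeFactors := Finset.disjoint_left.mp hdisj hpa
      rwa [← Nat.support_factorization, Finsupp.notMem_support_iff] at this
    simp [this]
  have hfb : ∀ p ∈ b.primeFactors, (a * b).factorization p = b.factorization p := by
    intro p hpb
    rw [Nat.factorization_mul ha hb]
    have : a.factorization p = 0 := by
      have : p ∉ a.primeFactors := Finset.disjoint_right.mp hdisj hpb
      rwa [← Nat.support_factorization, Finsupp.notMem_support_iff] at this
    simp [this]
  rw [F, hU, Finset.prod_union hdisj, F, F]
  congr 1
  · exact Finset.prod_congr rfl fun p hp => by rw [hfa p hp]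
  · exact Finset.prod_congr rfl fun p hp => by rw [hfb p hp]

/-- `F m` as an arithmetic function. -/
def G (m : ℕ) : ArithmeticFunction ℤ :=
  ⟨fun n => if n = 0 then 0 else F m n, if_pos rfl⟩

lemma G_apply (m : ℕ) {n : ℕ} (hn : n ≠ 0) : G m n = F m n := by
  simp [G, hn, ArithmeticFunction.coe_mk]

lemma G_mult (m : ℕ) : (G m).IsMultiplicative := by
  refine ⟨by rw [G_apply m one_ne_zero, F_one], ?_⟩
  intro a b hab
  rcases eq_or_ne a 0 with rfl | ha
  · simp [G]
  rcases eq_or_ne b 0 with rfl | hb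
  · simp [G]
  rw [G_apply m (mul_ne_zero ha hb), G_apply m ha, G_apply m hb, F_mul m ha hb hab]

lemma prod_f {m n : ℕ} (hm : 1 ≤ m) (hn : 1 ≤ n) :
    (∏ p ∈ n.primeFactors, f (m - 1) (n.factorization p)) = f m n := by
  rcases eq_or_lt_of_le hn with rfl | h1
  · simp [f, H_le_one]
  have hH := H_eq h1
  by_cases hall : ∀ p ∈ n.primeFactors, H (n.factorization p) ≤ m - 1
  · rw [Finset.prod_eq_one fun p hp => by rw [f, if_pos (hall p hp)]]
    have : (n.primeFactors.sup fun p => H (n.factorization p)) ≤ m - 1 :=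
      Finset.sup_le hall
    rw [f, if_pos (by omega)]
  · push_neg at hall
    obtain ⟨p, hp, hgt⟩ := hall
    rw [Finset.prod_eq_zero hp (by rw [f, if_neg (by omega)])]
    have : H (n.factorization p) ≤ n.primeFactors.sup fun p => H (n.factorization p) :=
      Finset.le_sup (f := fun p => H (n.factorization p)) hp
    rw [f, if_neg (by omega)]

theorem stmt5 (m n : ℕ) (hm : 1 ≤ m) (hn : 1 ≤ n) :
    ∑ d ∈ n.divisors, F m d = f m n := by
  have hn0 : n ≠ 0 := by omega
  have key : ∀ k, k ≠ 0 → ∑ d ∈ k.divisors, F m d = ((↑ArithmeticFunction.zeta * G m) k : ℤ) := by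
    intro k hk
    rw [ArithmeticFunction.coe_zeta_mul_apply]
    exact Finset.sum_congr rfl fun d hd =>
      (G_apply m (Nat.pos_of_mem_divisors hd).ne').symm
  have hmult : (↑ArithmeticFunction.zeta * G m).IsMultiplicative :=
    (ArithmeticFunction.isMultiplicative_zeta.natCast).mul (G_mult m)
  rw [key n hn0, hmult.multiplicative_factorization _ hn0]
  rw [Finsupp.prod, Nat.support_factorization, ← prod_f hm hn]
  refine Finset.prod_congr rfl fun p hp => ?_
  have hpp := Nat.prime_of_mem_primeFactors hp
  rw [← key _ (pow_ne_zero _ hpp.ne_zero), sum_F_prime_pow m hpp]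
end

section
/- Let 𝓕_m(n) = ∏_{p^α ∥ n} (f_{m-1}(α) − f_{m-1}(α−1)) where f_k(n) indicates H(n) ≤ k. Then |𝓕_m(n)| ≤ 1 for all n, and if 𝓕_m(n) ≠ 0 and p is a prime dividing n, then p^(2↑↑m) divides n. -/
lemma H_le_of_lt_tet (k : ℕ) : ∀ n, n < tet (k + 1) → H n ≤ k := by
  induction k with
  | zero =>
    intro n hn
    have : n ≤ 1 := by simpa [tet] using Nat.lt_succ_iff.mp (by simpa [tet] using hn)
    rw [H]
    simp [this]
  | succ k ih =>
    intro n hn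
    rw [H]
    split
    · omega
    · rename_i h
      have hn0 : 0 < n := by omega
      have : (n.primeFactors.attach.sup fun p => H (n.factorization p.1)) ≤ k := by
        apply Finset.sup_le
        intro p _
        have hp : p.1.Prime := Nat.prime_of_mem_primeFactors p.2
        have hdvd : p.1 ^ n.factorization p.1 ∣ n := Nat.ordProj_dvd n p.1
        have h2 : 2 ^ n.factorization p.1 ≤ n := by
          calc 2 ^ n.factorization p.1 ≤ p.1 ^ n.factorization p.1 :=
                Nat.pow_le_pow_left hp.two_le _
            _ ≤ n := Nat.le_of_dvd hn0 hdvd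
        have : 2 ^ n.factorization p.1 < 2 ^ tet (k + 1) := by
          calc 2 ^ n.factorization p.1 ≤ n := h2
            _ < tet (k + 2) := hn
            _ = 2 ^ tet (k + 1) := rfl
        exact ih _ (Nat.pow_lt_pow_iff_right (by norm_num) |>.mp this)
      omega

theorem stmt6 (m : ℕ) (hm : 1 ≤ m) (n : ℕ) (hn : 1 ≤ n) :
    |F m n| ≤ 1 ∧
      (F m n ≠ 0 → ∀ p : ℕ, p.Prime → p ∣ n → p ^ tet m ∣ n) := by
  constructor
  · rw [F, Finset.abs_prod]
    calc (∏ p ∈ n.primeFactors,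
          |f (m - 1) (n.factorization p) - f (m - 1) (n.factorization p - 1)|)
        ≤ ∏ p ∈ n.primeFactors, 1 := by
          apply Finset.prod_le_prod
          · intro i _; exact abs_nonneg _
          · intro i _
            unfold f
            split <;> split <;> norm_num
      _ = 1 := Finset.prod_const_one
  · intro hF p hp hpn
    have hn0 : n ≠ 0 := by omega
    have hmem : p ∈ n.primeFactors := Nat.mem_primeFactors.mpr ⟨hp, hpn, hn0⟩
    rw [F, Finset.prod_ne_zero_iff] at hF
    have hne := hF p hmem
    set α := n.factorization p with hα
    have hge : tet m ≤ α := by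
      by_contra hlt
      push_neg at hlt
      obtain ⟨m', rfl⟩ : ∃ m', m = m' + 1 := ⟨m - 1, by omega⟩
      have h1 : H α ≤ m' := H_le_of_lt_tet m' α hlt
      have h2 : H (α - 1) ≤ m' := H_le_of_lt_tet m' _ (by omega)
      apply hne
      simp [f, h1, h2]
    exact dvd_trans (pow_dvd_pow p hge) (Nat.ordProj_dvd n p)
end

section
/- The constant κ = exp(∑_p 1/(p log p)), where the sum is over all primes p, satisfies κ ≤ 5.5 (in particular the series ∑_p 1/(p log p) converges). -/
open Finset

noncomputable def fP (n : ℕ) : ℝ := if n.Prime then 1 / (n * Real.log n) else 0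
noncomputable def lamP (n : ℕ) : ℝ := if n.Prime then Real.log n else 0
noncomputable def thP (M : ℕ) : ℝ := ∑ n ∈ Finset.range (M + 1), lamP n
noncomputable def hP (M : ℕ) : ℝ := 1 / (M * (Real.log M) ^ 2)

lemma fP_nonneg (n : ℕ) : 0 ≤ fP n := by
  unfold fP
  split_ifs with h
  · rcases Nat.eq_zero_or_pos n with rfl | hpos
    · simp
    · have h1 : (1:ℝ) ≤ n := by exact_mod_cast hpos
      have := Real.log_nonneg h1
      positivity
  · exact le_refl _

lemma lamP_nonneg (n : ℕ) : 0 ≤ lamP n := by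
  unfold lamP
  split_ifs with h
  · exact Real.log_nonneg (by exact_mod_cast h.one_lt.le)
  · exact le_refl _

lemma thP_eq (M : ℕ) : thP M = Real.log (primorial M) := by
  unfold thP lamP
  rw [← Finset.sum_filter]
  unfold primorial
  rw [Nat.cast_prod, Real.log_prod]
  intro x hx
  have hx2 := (by simpa using hx : x ≤ M ∧ Nat.Prime x).2
  exact_mod_cast hx2.pos.ne'

lemma cheby (M : ℕ) : thP M ≤ Real.log 4 * M := by
  rw [thP_eq]
  have h1 : ((primorial M : ℕ) : ℝ) ≤ ((4 ^ M : ℕ) : ℝ) := by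
    exact_mod_cast primorial_le_4_pow M
  have h2 : (0:ℝ) < (primorial M : ℕ) := by exact_mod_cast primorial_pos M
  have := Real.log_le_log h2 h1
  calc Real.log (primorial M) ≤ Real.log ((4:ℕ) ^ M : ℕ) := this
    _ = Real.log ((4:ℝ) ^ M) := by norm_num
    _ = Real.log 4 * M := by rw [Real.log_pow]; push_cast; ring

lemma log_lt_log_succ (M : ℕ) (hM : 1 ≤ M) : Real.log M < Real.log (M + 1) := by
  have : (0:ℝ) < M := by exact_mod_cast hM
  exact Real.log_lt_log this (by linarith)

lemma log_gap (M : ℕ) (hM : 1 ≤ M) :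
    1 / ((M:ℝ) + 1) ≤ Real.log ((M:ℝ) + 1) - Real.log M := by
  have hM0 : (0:ℝ) < M := by exact_mod_cast hM
  set x : ℝ := 1 / ((M:ℝ) + 1) with hx
  have hxpos : (0:ℝ) < x := by positivity
  have h2 := Real.add_one_le_exp (-x)
  rw [Real.exp_neg] at h2
  have h3 := mul_le_mul_of_nonneg_right h2 (Real.exp_pos x).le
  rw [inv_mul_cancel₀ (Real.exp_pos x).ne'] at h3
  have e : (-x + 1) = (M:ℝ) / ((M:ℝ) + 1) := by rw [hx]; field_simp; ring
  rw [e, div_mul_eq_mul_div, div_le_one (by positivity)] at h3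
  have h1 : Real.exp x ≤ ((M:ℝ)+1) / M := by
    rw [le_div_iff₀ hM0]; linarith
  have h7 : x ≤ Real.log (((M:ℝ)+1)/M) := by
    have := Real.log_le_log (Real.exp_pos _) h1
    rwa [Real.log_exp] at this
  rwa [Real.log_div (by linarith) (by linarith)] at h7

lemma key (M : ℕ) (hM : 1000 ≤ M) :
    (Real.log 4 * (M+1) - thP M) * hP (M+1) + Real.log 4 / Real.log (M+1) ≤
      (Real.log 4 * M - thP M) * hP M + Real.log 4 / Real.log M := by
  have hM1 : (1000:ℝ) ≤ M := by exact_mod_cast hM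
  have hlM : (0:ℝ) < Real.log M := Real.log_pos (by linarith)
  have hlM1 : (0:ℝ) < Real.log (M+1) := Real.log_pos (by linarith)
  have hMlt : Real.log ((M:ℝ)) < Real.log ((M:ℝ)+1) :=
    Real.log_lt_log (by linarith) (by linarith)
  have hC : (0:ℝ) < Real.log 4 := Real.log_pos (by norm_num)
  have hcast : ((M+1 : ℕ):ℝ) = (M:ℝ) + 1 := by push_cast; ring
  have hh1 : hP (M+1) ≤ hP M := by
    unfold hP
    rw [hcast]
    apply one_div_le_one_div_of_le
    · positivity
    · have : Real.log M ^ 2 ≤ Real.log (M+1) ^2 := by nlinarith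
      nlinarith
  have hh2 : (0:ℝ) ≤ Real.log 4 * M - thP M := by linarith [cheby M]
  have hh3 : hP (M+1) ≤ 1 / Real.log M - 1 / Real.log (M+1) := by
    unfold hP
    rw [hcast]
    have h1 : 1 / Real.log M - 1 / Real.log (M+1)
        = (Real.log (M+1) - Real.log M) / (Real.log M * Real.log (M+1)) := by
      field_simp
    have hgap' : 1/((M:ℝ)+1) ≤ Real.log ((M:ℝ)+1) - Real.log M := log_gap M (by omega)
    rw [h1]
    rw [div_le_div_iff₀ (by positivity) (by positivity)]
    have hlog1 : Real.log ((M:ℝ)+1) = Real.log ((M+1:ℕ):ℝ) := by rw [hcast]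
    have r1 : (1/((M:ℝ)+1)) * (((M:ℝ)+1) * Real.log ((M:ℝ)+1)^2) ≤ (Real.log ((M:ℝ)+1) - Real.log M) * (((M:ℝ)+1) * Real.log ((M:ℝ)+1)^2) :=
      mul_le_mul_of_nonneg_right hgap' (by positivity)
    have r2 : (1/((M:ℝ)+1)) * (((M:ℝ)+1) * Real.log ((M:ℝ)+1)^2) = Real.log ((M:ℝ)+1)^2 := by
      field_simp
    nlinarith [r1, r2, hlM, hlM1, hMlt]
  have expand : (Real.log 4 * (M+1) - thP M) * hP (M+1)
      = (Real.log 4 * M - thP M) * hP (M+1) + Real.log 4 * hP (M+1) := by ring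
  have t2 : (Real.log 4 * M - thP M) * hP (M+1) ≤ (Real.log 4 * M - thP M) * hP M :=
    mul_le_mul_of_nonneg_left hh1 hh2
  have t3 : Real.log 4 * hP (M+1) ≤ Real.log 4 * (1 / Real.log M - 1 / Real.log (M+1)) :=
    mul_le_mul_of_nonneg_left hh3 hC.le
  have t4 : Real.log 4 / Real.log (M+1) = Real.log 4 * (1/Real.log (M+1)) := by ring
  have t5 : Real.log 4 / Real.log M = Real.log 4 * (1/Real.log M) := by ring
  rw [expand, t4, t5]
  nlinarith [t2, t3]

lemma fP_eq (m : ℕ) (hm : 2 ≤ m) : fP m = lamP m * hP m := by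
  unfold fP lamP hP
  split_ifs with h
  · have hm1 : (1:ℝ) < m := by exact_mod_cast hm
    have hl : 0 < Real.log m := Real.log_pos hm1
    have hm0 : (0:ℝ) < m := by linarith
    field_simp
  · simp

lemma tailbound : ∀ M : ℕ, 1000 ≤ M →
    (∑ n ∈ Finset.Ico 1001 (M+1), fP n) + (Real.log 4 * (M:ℝ) - thP M) * hP M
        + Real.log 4 / Real.log (M:ℝ)
      ≤ (Real.log 4 * ((1000:ℕ):ℝ) - thP 1000) * hP 1000
        + Real.log 4 / Real.log ((1000:ℕ):ℝ) := by
  refine Nat.le_induction ?_ ?_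
  · simp
  · intro n hn ih
    have hsum : ∑ m ∈ Finset.Ico 1001 (n+1+1), fP m
        = (∑ m ∈ Finset.Ico 1001 (n+1), fP m) + fP (n+1) :=
      Finset.sum_Ico_succ_top (by omega) _
    have hth : thP (n+1) = thP n + lamP (n+1) := Finset.sum_range_succ _ _
    have hfe : fP (n+1) = lamP (n+1) * hP (n+1) := fP_eq (n+1) (by omega)
    have hkey := key n hn
    have hcast : ((n+1:ℕ):ℝ) = (n:ℝ)+1 := by push_cast; ring
    calc (∑ m ∈ Finset.Ico 1001 (n+1+1), fP m)
          + (Real.log 4 * ((n+1:ℕ):ℝ) - thP (n+1)) * hP (n+1)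
          + Real.log 4 / Real.log ((n+1:ℕ):ℝ)
        = (∑ m ∈ Finset.Ico 1001 (n+1), fP m)
          + ((Real.log 4 * ((n:ℝ)+1) - thP n) * hP (n+1)
             + Real.log 4 / Real.log ((n:ℝ)+1)) := by
          rw [hsum, hth, hfe, hcast]; ring
      _ ≤ (∑ m ∈ Finset.Ico 1001 (n+1), fP m)
          + ((Real.log 4 * (n:ℝ) - thP n) * hP n + Real.log 4 / Real.log (n:ℝ)) := by
          have := key n hn
          linarith [this]
      _ ≤ _ := by linarith [ih]

lemma loglb (x : ℝ) (a b : ℕ) (hb : 0 < b) (hx : 1 ≤ x) (h : (2:ℝ)^a ≤ x^b) :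
    (a:ℝ)/b * 0.6931471803 ≤ Real.log x := by
  have l2 : (0.6931471803:ℝ) ≤ Real.log 2 := le_of_lt Real.log_two_gt_d9
  have h1 : (a:ℝ) * Real.log 2 ≤ (b:ℝ) * Real.log x := by
    rw [show (a:ℝ) * Real.log 2 = Real.log ((2:ℝ)^a) from (Real.log_pow (2:ℝ) a).symm,
        show (b:ℝ) * Real.log x = Real.log (x^b) from (Real.log_pow x b).symm]
    exact Real.log_le_log (by positivity) h
  have hb' : (0:ℝ) < b := by exact_mod_cast hb
  rw [div_mul_eq_mul_div, div_le_iff₀ hb']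
  have h0 : (0:ℝ) ≤ (a:ℝ) := by positivity
  nlinarith [mul_le_mul_of_nonneg_left l2 h0]

lemma loglb_nat (p a b : ℕ) (hb : 0 < b) (hp : 1 ≤ p) (h : 2^a ≤ p^b) :
    (a:ℝ)/b * 0.6931471803 ≤ Real.log (p:ℝ) := by
  apply loglb _ a b hb (by exact_mod_cast hp)
  exact_mod_cast h

lemma termub (p : ℕ) (L r : ℝ) (hp : 2 ≤ p) (hL : 0 < L) (hlog : L ≤ Real.log (p:ℝ))
    (hr : 1/(L*p) ≤ r) : 1/((p:ℝ) * Real.log (p:ℝ)) ≤ r := by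
  have hp0 : (0:ℝ) < p := by positivity
  calc 1/((p:ℝ) * Real.log (p:ℝ)) ≤ 1/((p:ℝ) * L) := by
        apply one_div_le_one_div_of_le (by positivity)
        exact mul_le_mul_of_nonneg_left hlog hp0.le
    _ = 1/(L * p) := by ring_nf
    _ ≤ r := hr

def isP (n : ℕ) : Bool :=
  decide (2 ≤ n) && (List.range 32).all fun d => decide (d < 2) || decide (n < d*d) || decide (n % d ≠ 0)

lemma isP_iff {n : ℕ} (hn : n < 1024) : isP n = true ↔ n.Prime := by
  rw [Nat.prime_def_le_sqrt]
  simp only [isP, Bool.and_eq_true, decide_eq_true_eq, List.all_eq_true, List.mem_range,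
    Bool.or_eq_true]
  constructor
  · rintro ⟨h2, hall⟩
    refine ⟨h2, fun m hm2 hms => ?_⟩
    have hsq : Nat.sqrt n < 32 := by
      rw [Nat.sqrt_lt']
      calc n < 1024 := hn
        _ = 32^2 := by norm_num
    have hm32 : m < 32 := lt_of_le_of_lt hms hsq
    rcases hall m hm32 with (h | h) | h
    · omega
    · have := Nat.le_sqrt.mp hms
      omega
    · rw [Nat.dvd_iff_mod_eq_zero]; exact h
  · rintro ⟨h2, hpr⟩
    refine ⟨h2, fun d hd32 => ?_⟩
    by_cases hd2 : d < 2
    · exact Or.inl (Or.inl hd2)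
    · by_cases hdd : n < d*d
      · exact Or.inl (Or.inr hdd)
      · refine Or.inr ?_
        simp only [decide_eq_true_eq, ne_eq, ← Nat.dvd_iff_mod_eq_zero]
        exact hpr d (by omega) (Nat.le_sqrt.mpr (by omega))

def PL : List ℕ := [2,3,5,7,11,13,17,19,23,29,31,37,41,43,47,53,59,61,67,71,73,79,83,89,97,101,103,107,109,113,127,131,137,139,149,151,157,163,167,173,179,181,191,193,197,199,211,223,227,229,233,239,241,251,257,263,269,271,277,281,283,293,307,311,313,317,331,337,347,349,353,359,367,373,379,383,389,397,401,409,419,421,431,433,439,443,449,457,461,463,467,479,487,491,499,503,509,521,523,541,547,557,563,569,571,577,587,593,599,601,607,613,617,619,631,641,643,647,653,659,661,673,677,683,691,701,709,719,727,733,739,743,751,757,761,769,773,787,797,809,811,821,823,827,829,839,853,857,859,863,877,881,883,887,907,911,919,929,937,941,947,953,967,971,977,983,991,997]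

set_option maxRecDepth 100000 in
set_option maxHeartbeats 1000000 in
lemma filterE : Finset.filter Nat.Prime (Finset.range 1001) = PL.toFinset := by
  have h1 : Finset.filter Nat.Prime (Finset.range 1001)
      = Finset.filter (fun n => isP n = true) (Finset.range 1001) :=
    Finset.filter_congr fun n hn => by
      rw [Finset.mem_range] at hn
      exact (isP_iff (by omega)).symm
  rw [h1]
  decide

set_option maxRecDepth 10000 in
lemma PL_nodup : PL.Nodup := by decide

lemma head_eq : ∑ n ∈ Finset.range 1001, fP n
    = (PL.map (fun p : ℕ => 1/((p:ℝ) * Real.log (p:ℝ)))).sum := by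
  unfold fP
  rw [← Finset.sum_filter, filterE, List.sum_toFinset _ PL_nodup]

lemma theta_eq : thP 1000
    = (PL.map (fun p : ℕ => Real.log (p:ℝ))).sum := by
  unfold thP lamP
  rw [show Finset.range (1000+1) = Finset.range 1001 from rfl,
      ← Finset.sum_filter, filterE, List.sum_toFinset _ PL_nodup]

set_option maxHeartbeats 4000000 in
set_option maxRecDepth 100000 in
lemma headbound : ∑ n ∈ Finset.range 1001, fP n ≤ 1.49239194 := by
  rw [head_eq]
  simp only [PL, List.map_cons, List.map_nil, List.sum_cons, List.sum_nil]
  have g2 := loglb_nat 2 1 1 (by norm_num) (by norm_num) (by norm_num)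
  have h2 : 1/(((2:ℕ):ℝ) * Real.log ((2:ℕ):ℝ)) ≤ (0.721347521:ℝ) := termub 2 _ _ (by norm_num) (by norm_num) g2 (by norm_num)
  have g3 := loglb_nat 3 1623 1024 (by norm_num) (by norm_num) (by decide +kernel)
  have h3 : 1/(((3:ℕ):ℝ) * Real.log ((3:ℕ):ℝ)) ≤ (0.303413375:ℝ) := termub 3 _ _ (by norm_num) (by norm_num) g3 (by norm_num)
  have g5 := loglb_nat 5 2377 1024 (by norm_num) (by norm_num) (by decide +kernel)
  have h5 : 1/(((5:ℕ):ℝ) * Real.log ((5:ℕ):ℝ)) ≤ (0.124301197:ℝ) := termub 5 _ _ (by norm_num) (by norm_num) g5 (by norm_num)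
  have g7 := loglb_nat 7 2874 1024 (by norm_num) (by norm_num) (by decide +kernel)
  have h7 : 1/(((7:ℕ):ℝ) * Real.log ((7:ℕ):ℝ)) ≤ (0.073432733:ℝ) := termub 7 _ _ (by norm_num) (by norm_num) g7 (by norm_num)
  have g11 := loglb_nat 11 3542 1024 (by norm_num) (by norm_num) (by decide +kernel)
  have h11 : 1/(((11:ℕ):ℝ) * Real.log ((11:ℕ):ℝ)) ≤ (0.037916938:ℝ) := termub 11 _ _ (by norm_num) (by norm_num) g11 (by norm_num)
  have g13 := loglb_nat 13 3789 1024 (by norm_num) (by norm_num) (by decide +kernel)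
  have h13 : 1/(((13:ℕ):ℝ) * Real.log ((13:ℕ):ℝ)) ≤ (0.029992077:ℝ) := termub 13 _ _ (by norm_num) (by norm_num) g13 (by norm_num)
  have g17 := loglb_nat 17 4185 1024 (by norm_num) (by norm_num) (by decide +kernel)
  have h17 : 1/(((17:ℕ):ℝ) * Real.log ((17:ℕ):ℝ)) ≤ (0.020764913:ℝ) := termub 17 _ _ (by norm_num) (by norm_num) g17 (by norm_num)
  have g19 := loglb_nat 19 4349 1024 (by norm_num) (by norm_num) (by decide +kernel)
  have h19 : 1/(((19:ℕ):ℝ) * Real.log ((19:ℕ):ℝ)) ≤ (0.017878517:ℝ) := termub 19 _ _ (by norm_num) (by norm_num) g19 (by norm_num)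
  have g23 := loglb_nat 23 4632 1024 (by norm_num) (by norm_num) (by decide +kernel)
  have h23 : 1/(((23:ℕ):ℝ) * Real.log ((23:ℕ):ℝ)) ≤ (0.013866860:ℝ) := termub 23 _ _ (by norm_num) (by norm_num) g23 (by norm_num)
  have g29 := loglb_nat 29 4974 1024 (by norm_num) (by norm_num) (by decide +kernel)
  have h29 : 1/(((29:ℕ):ℝ) * Real.log ((29:ℕ):ℝ)) ≤ (0.010241669:ℝ) := termub 29 _ _ (by norm_num) (by norm_num) g29 (by norm_num)
  have g31 := loglb_nat 31 5073 1024 (by norm_num) (by norm_num) (by decide +kernel)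
  have h31 : 1/(((31:ℕ):ℝ) * Real.log ((31:ℕ):ℝ)) ≤ (0.009393944:ℝ) := termub 31 _ _ (by norm_num) (by norm_num) g31 (by norm_num)
  have g37 := loglb_nat 37 5334 1024 (by norm_num) (by norm_num) (by decide +kernel)
  have h37 : 1/(((37:ℕ):ℝ) * Real.log ((37:ℕ):ℝ)) ≤ (0.007485482:ℝ) := termub 37 _ _ (by norm_num) (by norm_num) g37 (by norm_num)
  have g41 := loglb_nat 41 5486 1024 (by norm_num) (by norm_num) (by decide +kernel)
  have h41 : 1/(((41:ℕ):ℝ) * Real.log ((41:ℕ):ℝ)) ≤ (0.006568026:ℝ) := termub 41 _ _ (by norm_num) (by norm_num) g41 (by norm_num)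
  have g43 := loglb_nat 43 5556 1024 (by norm_num) (by norm_num) (by decide +kernel)
  have h43 : 1/(((43:ℕ):ℝ) * Real.log ((43:ℕ):ℝ)) ≤ (0.006183635:ℝ) := termub 43 _ _ (by norm_num) (by norm_num) g43 (by norm_num)
  have g47 := loglb_nat 47 5687 1024 (by norm_num) (by norm_num) (by decide +kernel)
  have h47 : 1/(((47:ℕ):ℝ) * Real.log ((47:ℕ):ℝ)) ≤ (0.005527051:ℝ) := termub 47 _ _ (by norm_num) (by norm_num) g47 (by norm_num)
  have g53 := loglb_nat 53 5865 1024 (by norm_num) (by norm_num) (by decide +kernel)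
  have h53 : 1/(((53:ℕ):ℝ) * Real.log ((53:ℕ):ℝ)) ≤ (0.004752593:ℝ) := termub 53 _ _ (by norm_num) (by norm_num) g53 (by norm_num)
  have g59 := loglb_nat 59 6023 1024 (by norm_num) (by norm_num) (by decide +kernel)
  have h59 : 1/(((59:ℕ):ℝ) * Real.log ((59:ℕ):ℝ)) ≤ (0.004157284:ℝ) := termub 59 _ _ (by norm_num) (by norm_num) g59 (by norm_num)
  have g61 := loglb_nat 61 6073 1024 (by norm_num) (by norm_num) (by decide +kernel)
  have h61 : 1/(((61:ℕ):ℝ) * Real.log ((61:ℕ):ℝ)) ≤ (0.003987874:ℝ) := termub 61 _ _ (by norm_num) (by norm_num) g61 (by norm_num)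
  have g67 := loglb_nat 67 6211 1024 (by norm_num) (by norm_num) (by decide +kernel)
  have h67 : 1/(((67:ℕ):ℝ) * Real.log ((67:ℕ):ℝ)) ≤ (0.003550081:ℝ) := termub 67 _ _ (by norm_num) (by norm_num) g67 (by norm_num)
  have g71 := loglb_nat 71 6297 1024 (by norm_num) (by norm_num) (by decide +kernel)
  have h71 : 1/(((71:ℕ):ℝ) * Real.log ((71:ℕ):ℝ)) ≤ (0.003304323:ℝ) := termub 71 _ _ (by norm_num) (by norm_num) g71 (by norm_num)
  have g73 := loglb_nat 73 6338 1024 (by norm_num) (by norm_num) (by decide +kernel)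
  have h73 : 1/(((73:ℕ):ℝ) * Real.log ((73:ℕ):ℝ)) ≤ (0.003193004:ℝ) := termub 73 _ _ (by norm_num) (by norm_num) g73 (by norm_num)
  have g79 := loglb_nat 79 6455 1024 (by norm_num) (by norm_num) (by decide +kernel)
  have h79 : 1/(((79:ℕ):ℝ) * Real.log ((79:ℕ):ℝ)) ≤ (0.002897018:ℝ) := termub 79 _ _ (by norm_num) (by norm_num) g79 (by norm_num)
  have g83 := loglb_nat 83 6528 1024 (by norm_num) (by norm_num) (by decide +kernel)
  have h83 : 1/(((83:ℕ):ℝ) * Real.log ((83:ℕ):ℝ)) ≤ (0.002726568:ℝ) := termub 83 _ _ (by norm_num) (by norm_num) g83 (by norm_num)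
  have g89 := loglb_nat 89 6631 1024 (by norm_num) (by norm_num) (by decide +kernel)
  have h89 : 1/(((89:ℕ):ℝ) * Real.log ((89:ℕ):ℝ)) ≤ (0.002503258:ℝ) := termub 89 _ _ (by norm_num) (by norm_num) g89 (by norm_num)
  have g97 := loglb_nat 97 6758 1024 (by norm_num) (by norm_num) (by decide +kernel)
  have h97 : 1/(((97:ℕ):ℝ) * Real.log ((97:ℕ):ℝ)) ≤ (0.002253641:ℝ) := termub 97 _ _ (by norm_num) (by norm_num) g97 (by norm_num)
  have g101 := loglb_nat 101 6818 1024 (by norm_num) (by norm_num) (by decide +kernel)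
  have h101 : 1/(((101:ℕ):ℝ) * Real.log ((101:ℕ):ℝ)) ≤ (0.002145340:ℝ) := termub 101 _ _ (by norm_num) (by norm_num) g101 (by norm_num)
  have g103 := loglb_nat 103 6846 1024 (by norm_num) (by norm_num) (by decide +kernel)
  have h103 : 1/(((103:ℕ):ℝ) * Real.log ((103:ℕ):ℝ)) ≤ (0.002095079:ℝ) := termub 103 _ _ (by norm_num) (by norm_num) g103 (by norm_num)
  have g107 := loglb_nat 107 6903 1024 (by norm_num) (by norm_num) (by decide +kernel)
  have h107 : 1/(((107:ℕ):ℝ) * Real.log ((107:ℕ):ℝ)) ≤ (0.002000106:ℝ) := termub 107 _ _ (by norm_num) (by norm_num) g107 (by norm_num)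
  have g109 := loglb_nat 109 6930 1024 (by norm_num) (by norm_num) (by decide +kernel)
  have h109 : 1/(((109:ℕ):ℝ) * Real.log ((109:ℕ):ℝ)) ≤ (0.001955757:ℝ) := termub 109 _ _ (by norm_num) (by norm_num) g109 (by norm_num)
  have g113 := loglb_nat 113 6983 1024 (by norm_num) (by norm_num) (by decide +kernel)
  have h113 : 1/(((113:ℕ):ℝ) * Real.log ((113:ℕ):ℝ)) ≤ (0.001872208:ℝ) := termub 113 _ _ (by norm_num) (by norm_num) g113 (by norm_num)
  have g127 := loglb_nat 127 7156 1024 (by norm_num) (by norm_num) (by decide +kernel)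
  have h127 : 1/(((127:ℕ):ℝ) * Real.log ((127:ℕ):ℝ)) ≤ (0.001625551:ℝ) := termub 127 _ _ (by norm_num) (by norm_num) g127 (by norm_num)
  have g131 := loglb_nat 131 7202 1024 (by norm_num) (by norm_num) (by decide +kernel)
  have h131 : 1/(((131:ℕ):ℝ) * Real.log ((131:ℕ):ℝ)) ≤ (0.001565850:ℝ) := termub 131 _ _ (by norm_num) (by norm_num) g131 (by norm_num)
  have g137 := loglb_nat 137 7268 1024 (by norm_num) (by norm_num) (by decide +kernel)
  have h137 : 1/(((137:ℕ):ℝ) * Real.log ((137:ℕ):ℝ)) ≤ (0.001483676:ℝ) := termub 137 _ _ (by norm_num) (by norm_num) g137 (by norm_num)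
  have g139 := loglb_nat 139 7289 1024 (by norm_num) (by norm_num) (by decide +kernel)
  have h139 : 1/(((139:ℕ):ℝ) * Real.log ((139:ℕ):ℝ)) ≤ (0.001458115:ℝ) := termub 139 _ _ (by norm_num) (by norm_num) g139 (by norm_num)
  have g149 := loglb_nat 149 7392 1024 (by norm_num) (by norm_num) (by decide +kernel)
  have h149 : 1/(((149:ℕ):ℝ) * Real.log ((149:ℕ):ℝ)) ≤ (0.001341302:ℝ) := termub 149 _ _ (by norm_num) (by norm_num) g149 (by norm_num)
  have g151 := loglb_nat 151 7412 1024 (by norm_num) (by norm_num) (by decide +kernel)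
  have h151 : 1/(((151:ℕ):ℝ) * Real.log ((151:ℕ):ℝ)) ≤ (0.001319965:ℝ) := termub 151 _ _ (by norm_num) (by norm_num) g151 (by norm_num)
  have g157 := loglb_nat 157 7469 1024 (by norm_num) (by norm_num) (by decide +kernel)
  have h157 : 1/(((157:ℕ):ℝ) * Real.log ((157:ℕ):ℝ)) ≤ (0.001259832:ℝ) := termub 157 _ _ (by norm_num) (by norm_num) g157 (by norm_num)
  have g163 := loglb_nat 163 7525 1024 (by norm_num) (by norm_num) (by decide +kernel)
  have h163 : 1/(((163:ℕ):ℝ) * Real.log ((163:ℕ):ℝ)) ≤ (0.001204427:ℝ) := termub 163 _ _ (by norm_num) (by norm_num) g163 (by norm_num)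
  have g167 := loglb_nat 167 7560 1024 (by norm_num) (by norm_num) (by decide +kernel)
  have h167 : 1/(((167:ℕ):ℝ) * Real.log ((167:ℕ):ℝ)) ≤ (0.001170136:ℝ) := termub 167 _ _ (by norm_num) (by norm_num) g167 (by norm_num)
  have g173 := loglb_nat 173 7613 1024 (by norm_num) (by norm_num) (by decide +kernel)
  have h173 : 1/(((173:ℕ):ℝ) * Real.log ((173:ℕ):ℝ)) ≤ (0.001121690:ℝ) := termub 173 _ _ (by norm_num) (by norm_num) g173 (by norm_num)
  have g179 := loglb_nat 179 7663 1024 (by norm_num) (by norm_num) (by decide +kernel)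
  have h179 : 1/(((179:ℕ):ℝ) * Real.log ((179:ℕ):ℝ)) ≤ (0.001077018:ℝ) := termub 179 _ _ (by norm_num) (by norm_num) g179 (by norm_num)
  have g181 := loglb_nat 181 7679 1024 (by norm_num) (by norm_num) (by decide +kernel)
  have h181 : 1/(((181:ℕ):ℝ) * Real.log ((181:ℕ):ℝ)) ≤ (0.001062898:ℝ) := termub 181 _ _ (by norm_num) (by norm_num) g181 (by norm_num)
  have g191 := loglb_nat 191 7759 1024 (by norm_num) (by norm_num) (by decide +kernel)
  have h191 : 1/(((191:ℕ):ℝ) * Real.log ((191:ℕ):ℝ)) ≤ (0.000996863:ℝ) := termub 191 _ _ (by norm_num) (by norm_num) g191 (by norm_num)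
  have g193 := loglb_nat 193 7774 1024 (by norm_num) (by norm_num) (by decide +kernel)
  have h193 : 1/(((193:ℕ):ℝ) * Real.log ((193:ℕ):ℝ)) ≤ (0.000984630:ℝ) := termub 193 _ _ (by norm_num) (by norm_num) g193 (by norm_num)
  have g197 := loglb_nat 197 7804 1024 (by norm_num) (by norm_num) (by decide +kernel)
  have h197 : 1/(((197:ℕ):ℝ) * Real.log ((197:ℕ):ℝ)) ≤ (0.000960929:ℝ) := termub 197 _ _ (by norm_num) (by norm_num) g197 (by norm_num)
  have g199 := loglb_nat 199 7819 1024 (by norm_num) (by norm_num) (by decide +kernel)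
  have h199 : 1/(((199:ℕ):ℝ) * Real.log ((199:ℕ):ℝ)) ≤ (0.000949446:ℝ) := termub 199 _ _ (by norm_num) (by norm_num) g199 (by norm_num)
  have g211 := loglb_nat 211 7906 1024 (by norm_num) (by norm_num) (by decide +kernel)
  have h211 : 1/(((211:ℕ):ℝ) * Real.log ((211:ℕ):ℝ)) ≤ (0.000885596:ℝ) := termub 211 _ _ (by norm_num) (by norm_num) g211 (by norm_num)
  have g223 := loglb_nat 223 7988 1024 (by norm_num) (by norm_num) (by decide +kernel)
  have h223 : 1/(((223:ℕ):ℝ) * Real.log ((223:ℕ):ℝ)) ≤ (0.000829339:ℝ) := termub 223 _ _ (by norm_num) (by norm_num) g223 (by norm_num)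
  have g227 := loglb_nat 227 8014 1024 (by norm_num) (by norm_num) (by decide +kernel)
  have h227 : 1/(((227:ℕ):ℝ) * Real.log ((227:ℕ):ℝ)) ≤ (0.000812081:ℝ) := termub 227 _ _ (by norm_num) (by norm_num) g227 (by norm_num)
  have g229 := loglb_nat 229 8027 1024 (by norm_num) (by norm_num) (by decide +kernel)
  have h229 : 1/(((229:ℕ):ℝ) * Real.log ((229:ℕ):ℝ)) ≤ (0.000803685:ℝ) := termub 229 _ _ (by norm_num) (by norm_num) g229 (by norm_num)
  have g233 := loglb_nat 233 8052 1024 (by norm_num) (by norm_num) (by decide +kernel)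
  have h233 : 1/(((233:ℕ):ℝ) * Real.log ((233:ℕ):ℝ)) ≤ (0.000787436:ℝ) := termub 233 _ _ (by norm_num) (by norm_num) g233 (by norm_num)
  have g239 := loglb_nat 239 8090 1024 (by norm_num) (by norm_num) (by decide +kernel)
  have h239 : 1/(((239:ℕ):ℝ) * Real.log ((239:ℕ):ℝ)) ≤ (0.000764062:ℝ) := termub 239 _ _ (by norm_num) (by norm_num) g239 (by norm_num)
  have g241 := loglb_nat 241 8102 1024 (by norm_num) (by norm_num) (by decide +kernel)
  have h241 : 1/(((241:ℕ):ℝ) * Real.log ((241:ℕ):ℝ)) ≤ (0.000756599:ℝ) := termub 241 _ _ (by norm_num) (by norm_num) g241 (by norm_num)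
  have g251 := loglb_nat 251 8162 1024 (by norm_num) (by norm_num) (by decide +kernel)
  have h251 : 1/(((251:ℕ):ℝ) * Real.log ((251:ℕ):ℝ)) ≤ (0.000721115:ℝ) := termub 251 _ _ (by norm_num) (by norm_num) g251 (by norm_num)
  have g257 := loglb_nat 257 8197 1024 (by norm_num) (by norm_num) (by decide +kernel)
  have h257 : 1/(((257:ℕ):ℝ) * Real.log ((257:ℕ):ℝ)) ≤ (0.000701272:ℝ) := termub 257 _ _ (by norm_num) (by norm_num) g257 (by norm_num)
  have g263 := loglb_nat 263 8231 1024 (by norm_num) (by norm_num) (by decide +kernel)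
  have h263 : 1/(((263:ℕ):ℝ) * Real.log ((263:ℕ):ℝ)) ≤ (0.000682443:ℝ) := termub 263 _ _ (by norm_num) (by norm_num) g263 (by norm_num)
  have g269 := loglb_nat 269 8265 1024 (by norm_num) (by norm_num) (by decide +kernel)
  have h269 : 1/(((269:ℕ):ℝ) * Real.log ((269:ℕ):ℝ)) ≤ (0.000664477:ℝ) := termub 269 _ _ (by norm_num) (by norm_num) g269 (by norm_num)
  have g271 := loglb_nat 271 8276 1024 (by norm_num) (by norm_num) (by decide +kernel)
  have h271 : 1/(((271:ℕ):ℝ) * Real.log ((271:ℕ):ℝ)) ≤ (0.000658696:ℝ) := termub 271 _ _ (by norm_num) (by norm_num) g271 (by norm_num)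
  have g277 := loglb_nat 277 8308 1024 (by norm_num) (by norm_num) (by decide +kernel)
  have h277 : 1/(((277:ℕ):ℝ) * Real.log ((277:ℕ):ℝ)) ≤ (0.000641946:ℝ) := termub 277 _ _ (by norm_num) (by norm_num) g277 (by norm_num)
  have g281 := loglb_nat 281 8329 1024 (by norm_num) (by norm_num) (by decide +kernel)
  have h281 : 1/(((281:ℕ):ℝ) * Real.log ((281:ℕ):ℝ)) ≤ (0.000631213:ℝ) := termub 281 _ _ (by norm_num) (by norm_num) g281 (by norm_num)
  have g283 := loglb_nat 283 8340 1024 (by norm_num) (by norm_num) (by decide +kernel)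
  have h283 : 1/(((283:ℕ):ℝ) * Real.log ((283:ℕ):ℝ)) ≤ (0.000625925:ℝ) := termub 283 _ _ (by norm_num) (by norm_num) g283 (by norm_num)
  have g293 := loglb_nat 293 8391 1024 (by norm_num) (by norm_num) (by decide +kernel)
  have h293 : 1/(((293:ℕ):ℝ) * Real.log ((293:ℕ):ℝ)) ≤ (0.000600888:ℝ) := termub 293 _ _ (by norm_num) (by norm_num) g293 (by norm_num)
  have g307 := loglb_nat 307 8460 1024 (by norm_num) (by norm_num) (by decide +kernel)
  have h307 : 1/(((307:ℕ):ℝ) * Real.log ((307:ℕ):ℝ)) ≤ (0.000568809:ℝ) := termub 307 _ _ (by norm_num) (by norm_num) g307 (by norm_num)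
  have g311 := loglb_nat 311 8479 1024 (by norm_num) (by norm_num) (by decide +kernel)
  have h311 : 1/(((311:ℕ):ℝ) * Real.log ((311:ℕ):ℝ)) ≤ (0.000560235:ℝ) := termub 311 _ _ (by norm_num) (by norm_num) g311 (by norm_num)
  have g313 := loglb_nat 313 8488 1024 (by norm_num) (by norm_num) (by decide +kernel)
  have h313 : 1/(((313:ℕ):ℝ) * Real.log ((313:ℕ):ℝ)) ≤ (0.000556065:ℝ) := termub 313 _ _ (by norm_num) (by norm_num) g313 (by norm_num)
  have g317 := loglb_nat 317 8507 1024 (by norm_num) (by norm_num) (by decide +kernel)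
  have h317 : 1/(((317:ℕ):ℝ) * Real.log ((317:ℕ):ℝ)) ≤ (0.000547822:ℝ) := termub 317 _ _ (by norm_num) (by norm_num) g317 (by norm_num)
  have g331 := loglb_nat 331 8571 1024 (by norm_num) (by norm_num) (by decide +kernel)
  have h331 : 1/(((331:ℕ):ℝ) * Real.log ((331:ℕ):ℝ)) ≤ (0.000520733:ℝ) := termub 331 _ _ (by norm_num) (by norm_num) g331 (by norm_num)
  have g337 := loglb_nat 337 8598 1024 (by norm_num) (by norm_num) (by decide +kernel)
  have h337 : 1/(((337:ℕ):ℝ) * Real.log ((337:ℕ):ℝ)) ≤ (0.000509856:ℝ) := termub 337 _ _ (by norm_num) (by norm_num) g337 (by norm_num)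
  have g347 := loglb_nat 347 8641 1024 (by norm_num) (by norm_num) (by decide +kernel)
  have h347 : 1/(((347:ℕ):ℝ) * Real.log ((347:ℕ):ℝ)) ≤ (0.000492699:ℝ) := termub 347 _ _ (by norm_num) (by norm_num) g347 (by norm_num)
  have g349 := loglb_nat 349 8649 1024 (by norm_num) (by norm_num) (by decide +kernel)
  have h349 : 1/(((349:ℕ):ℝ) * Real.log ((349:ℕ):ℝ)) ≤ (0.000489422:ℝ) := termub 349 _ _ (by norm_num) (by norm_num) g349 (by norm_num)
  have g353 := loglb_nat 353 8666 1024 (by norm_num) (by norm_num) (by decide +kernel)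
  have h353 : 1/(((353:ℕ):ℝ) * Real.log ((353:ℕ):ℝ)) ≤ (0.000482927:ℝ) := termub 353 _ _ (by norm_num) (by norm_num) g353 (by norm_num)
  have g359 := loglb_nat 359 8691 1024 (by norm_num) (by norm_num) (by decide +kernel)
  have h359 : 1/(((359:ℕ):ℝ) * Real.log ((359:ℕ):ℝ)) ≤ (0.000473490:ℝ) := termub 359 _ _ (by norm_num) (by norm_num) g359 (by norm_num)
  have g367 := loglb_nat 367 8724 1024 (by norm_num) (by norm_num) (by decide +kernel)
  have h367 : 1/(((367:ℕ):ℝ) * Real.log ((367:ℕ):ℝ)) ≤ (0.000461417:ℝ) := termub 367 _ _ (by norm_num) (by norm_num) g367 (by norm_num)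
  have g373 := loglb_nat 373 8748 1024 (by norm_num) (by norm_num) (by decide +kernel)
  have h373 : 1/(((373:ℕ):ℝ) * Real.log ((373:ℕ):ℝ)) ≤ (0.000452749:ℝ) := termub 373 _ _ (by norm_num) (by norm_num) g373 (by norm_num)
  have g379 := loglb_nat 379 8771 1024 (by norm_num) (by norm_num) (by decide +kernel)
  have h379 : 1/(((379:ℕ):ℝ) * Real.log ((379:ℕ):ℝ)) ≤ (0.000444413:ℝ) := termub 379 _ _ (by norm_num) (by norm_num) g379 (by norm_num)
  have g383 := loglb_nat 383 8787 1024 (by norm_num) (by norm_num) (by decide +kernel)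
  have h383 : 1/(((383:ℕ):ℝ) * Real.log ((383:ℕ):ℝ)) ≤ (0.000438971:ℝ) := termub 383 _ _ (by norm_num) (by norm_num) g383 (by norm_num)
  have g389 := loglb_nat 389 8810 1024 (by norm_num) (by norm_num) (by decide +kernel)
  have h389 : 1/(((389:ℕ):ℝ) * Real.log ((389:ℕ):ℝ)) ≤ (0.000431072:ℝ) := termub 389 _ _ (by norm_num) (by norm_num) g389 (by norm_num)
  have g397 := loglb_nat 397 8840 1024 (by norm_num) (by norm_num) (by decide +kernel)
  have h397 : 1/(((397:ℕ):ℝ) * Real.log ((397:ℕ):ℝ)) ≤ (0.000420952:ℝ) := termub 397 _ _ (by norm_num) (by norm_num) g397 (by norm_num)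
  have g401 := loglb_nat 401 8854 1024 (by norm_num) (by norm_num) (by decide +kernel)
  have h401 : 1/(((401:ℕ):ℝ) * Real.log ((401:ℕ):ℝ)) ≤ (0.000416094:ℝ) := termub 401 _ _ (by norm_num) (by norm_num) g401 (by norm_num)
  have g409 := loglb_nat 409 8884 1024 (by norm_num) (by norm_num) (by decide +kernel)
  have h409 : 1/(((409:ℕ):ℝ) * Real.log ((409:ℕ):ℝ)) ≤ (0.000406577:ℝ) := termub 409 _ _ (by norm_num) (by norm_num) g409 (by norm_num)
  have g419 := loglb_nat 419 8919 1024 (by norm_num) (by norm_num) (by decide +kernel)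
  have h419 : 1/(((419:ℕ):ℝ) * Real.log ((419:ℕ):ℝ)) ≤ (0.000395316:ℝ) := termub 419 _ _ (by norm_num) (by norm_num) g419 (by norm_num)
  have g421 := loglb_nat 421 8926 1024 (by norm_num) (by norm_num) (by decide +kernel)
  have h421 : 1/(((421:ℕ):ℝ) * Real.log ((421:ℕ):ℝ)) ≤ (0.000393130:ℝ) := termub 421 _ _ (by norm_num) (by norm_num) g421 (by norm_num)
  have g431 := loglb_nat 431 8961 1024 (by norm_num) (by norm_num) (by decide +kernel)
  have h431 : 1/(((431:ℕ):ℝ) * Real.log ((431:ℕ):ℝ)) ≤ (0.000382509:ℝ) := termub 431 _ _ (by norm_num) (by norm_num) g431 (by norm_num)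
  have g433 := loglb_nat 433 8968 1024 (by norm_num) (by norm_num) (by decide +kernel)
  have h433 : 1/(((433:ℕ):ℝ) * Real.log ((433:ℕ):ℝ)) ≤ (0.000380445:ℝ) := termub 433 _ _ (by norm_num) (by norm_num) g433 (by norm_num)
  have g439 := loglb_nat 439 8988 1024 (by norm_num) (by norm_num) (by decide +kernel)
  have h439 : 1/(((439:ℕ):ℝ) * Real.log ((439:ℕ):ℝ)) ≤ (0.000374410:ℝ) := termub 439 _ _ (by norm_num) (by norm_num) g439 (by norm_num)
  have g443 := loglb_nat 443 9002 1024 (by norm_num) (by norm_num) (by decide +kernel)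
  have h443 : 1/(((443:ℕ):ℝ) * Real.log ((443:ℕ):ℝ)) ≤ (0.000370452:ℝ) := termub 443 _ _ (by norm_num) (by norm_num) g443 (by norm_num)
  have g449 := loglb_nat 449 9022 1024 (by norm_num) (by norm_num) (by decide +kernel)
  have h449 : 1/(((449:ℕ):ℝ) * Real.log ((449:ℕ):ℝ)) ≤ (0.000364692:ℝ) := termub 449 _ _ (by norm_num) (by norm_num) g449 (by norm_num)
  have g457 := loglb_nat 457 9048 1024 (by norm_num) (by norm_num) (by decide +kernel)
  have h457 : 1/(((457:ℕ):ℝ) * Real.log ((457:ℕ):ℝ)) ≤ (0.000357278:ℝ) := termub 457 _ _ (by norm_num) (by norm_num) g457 (by norm_num)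
  have g461 := loglb_nat 461 9060 1024 (by norm_num) (by norm_num) (by decide +kernel)
  have h461 : 1/(((461:ℕ):ℝ) * Real.log ((461:ℕ):ℝ)) ≤ (0.000353709:ℝ) := termub 461 _ _ (by norm_num) (by norm_num) g461 (by norm_num)
  have g463 := loglb_nat 463 9067 1024 (by norm_num) (by norm_num) (by decide +kernel)
  have h463 : 1/(((463:ℕ):ℝ) * Real.log ((463:ℕ):ℝ)) ≤ (0.000351909:ℝ) := termub 463 _ _ (by norm_num) (by norm_num) g463 (by norm_num)
  have g467 := loglb_nat 467 9080 1024 (by norm_num) (by norm_num) (by decide +kernel)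
  have h467 : 1/(((467:ℕ):ℝ) * Real.log ((467:ℕ):ℝ)) ≤ (0.000348395:ℝ) := termub 467 _ _ (by norm_num) (by norm_num) g467 (by norm_num)
  have g479 := loglb_nat 479 9117 1024 (by norm_num) (by norm_num) (by decide +kernel)
  have h479 : 1/(((479:ℕ):ℝ) * Real.log ((479:ℕ):ℝ)) ≤ (0.000338289:ℝ) := termub 479 _ _ (by norm_num) (by norm_num) g479 (by norm_num)
  have g487 := loglb_nat 487 9142 1024 (by norm_num) (by norm_num) (by decide +kernel)
  have h487 : 1/(((487:ℕ):ℝ) * Real.log ((487:ℕ):ℝ)) ≤ (0.000331822:ℝ) := termub 487 _ _ (by norm_num) (by norm_num) g487 (by norm_num)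
  have g491 := loglb_nat 491 9154 1024 (by norm_num) (by norm_num) (by decide +kernel)
  have h491 : 1/(((491:ℕ):ℝ) * Real.log ((491:ℕ):ℝ)) ≤ (0.000328687:ℝ) := termub 491 _ _ (by norm_num) (by norm_num) g491 (by norm_num)
  have g499 := loglb_nat 499 9178 1024 (by norm_num) (by norm_num) (by decide +kernel)
  have h499 : 1/(((499:ℕ):ℝ) * Real.log ((499:ℕ):ℝ)) ≤ (0.000322572:ℝ) := termub 499 _ _ (by norm_num) (by norm_num) g499 (by norm_num)
  have g503 := loglb_nat 503 9189 1024 (by norm_num) (by norm_num) (by decide +kernel)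
  have h503 : 1/(((503:ℕ):ℝ) * Real.log ((503:ℕ):ℝ)) ≤ (0.000319624:ℝ) := termub 503 _ _ (by norm_num) (by norm_num) g503 (by norm_num)
  have g509 := loglb_nat 509 9207 1024 (by norm_num) (by norm_num) (by decide +kernel)
  have h509 : 1/(((509:ℕ):ℝ) * Real.log ((509:ℕ):ℝ)) ≤ (0.000315239:ℝ) := termub 509 _ _ (by norm_num) (by norm_num) g509 (by norm_num)
  have g521 := loglb_nat 521 9241 1024 (by norm_num) (by norm_num) (by decide +kernel)
  have h521 : 1/(((521:ℕ):ℝ) * Real.log ((521:ℕ):ℝ)) ≤ (0.000306845:ℝ) := termub 521 _ _ (by norm_num) (by norm_num) g521 (by norm_num)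
  have g523 := loglb_nat 523 9247 1024 (by norm_num) (by norm_num) (by decide +kernel)
  have h523 : 1/(((523:ℕ):ℝ) * Real.log ((523:ℕ):ℝ)) ≤ (0.000305473:ℝ) := termub 523 _ _ (by norm_num) (by norm_num) g523 (by norm_num)
  have g541 := loglb_nat 541 9297 1024 (by norm_num) (by norm_num) (by decide +kernel)
  have h541 : 1/(((541:ℕ):ℝ) * Real.log ((541:ℕ):ℝ)) ≤ (0.000293721:ℝ) := termub 541 _ _ (by norm_num) (by norm_num) g541 (by norm_num)
  have g547 := loglb_nat 547 9313 1024 (by norm_num) (by norm_num) (by decide +kernel)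
  have h547 : 1/(((547:ℕ):ℝ) * Real.log ((547:ℕ):ℝ)) ≤ (0.000290000:ℝ) := termub 547 _ _ (by norm_num) (by norm_num) g547 (by norm_num)
  have g557 := loglb_nat 557 9340 1024 (by norm_num) (by norm_num) (by decide +kernel)
  have h557 : 1/(((557:ℕ):ℝ) * Real.log ((557:ℕ):ℝ)) ≤ (0.000283970:ℝ) := termub 557 _ _ (by norm_num) (by norm_num) g557 (by norm_num)
  have g563 := loglb_nat 563 9356 1024 (by norm_num) (by norm_num) (by decide +kernel)
  have h563 : 1/(((563:ℕ):ℝ) * Real.log ((563:ℕ):ℝ)) ≤ (0.000280464:ℝ) := termub 563 _ _ (by norm_num) (by norm_num) g563 (by norm_num)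
  have g569 := loglb_nat 569 9371 1024 (by norm_num) (by norm_num) (by decide +kernel)
  have h569 : 1/(((569:ℕ):ℝ) * Real.log ((569:ℕ):ℝ)) ≤ (0.000277062:ℝ) := termub 569 _ _ (by norm_num) (by norm_num) g569 (by norm_num)
  have g571 := loglb_nat 571 9377 1024 (by norm_num) (by norm_num) (by decide +kernel)
  have h571 : 1/(((571:ℕ):ℝ) * Real.log ((571:ℕ):ℝ)) ≤ (0.000275915:ℝ) := termub 571 _ _ (by norm_num) (by norm_num) g571 (by norm_num)
  have g577 := loglb_nat 577 9392 1024 (by norm_num) (by norm_num) (by decide +kernel)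
  have h577 : 1/(((577:ℕ):ℝ) * Real.log ((577:ℕ):ℝ)) ≤ (0.000272610:ℝ) := termub 577 _ _ (by norm_num) (by norm_num) g577 (by norm_num)
  have g587 := loglb_nat 587 9417 1024 (by norm_num) (by norm_num) (by decide +kernel)
  have h587 : 1/(((587:ℕ):ℝ) * Real.log ((587:ℕ):ℝ)) ≤ (0.000267254:ℝ) := termub 587 _ _ (by norm_num) (by norm_num) g587 (by norm_num)
  have g593 := loglb_nat 593 9432 1024 (by norm_num) (by norm_num) (by decide +kernel)
  have h593 : 1/(((593:ℕ):ℝ) * Real.log ((593:ℕ):ℝ)) ≤ (0.000264129:ℝ) := termub 593 _ _ (by norm_num) (by norm_num) g593 (by norm_num)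
  have g599 := loglb_nat 599 9447 1024 (by norm_num) (by norm_num) (by decide +kernel)
  have h599 : 1/(((599:ℕ):ℝ) * Real.log ((599:ℕ):ℝ)) ≤ (0.000261069:ℝ) := termub 599 _ _ (by norm_num) (by norm_num) g599 (by norm_num)
  have g601 := loglb_nat 601 9452 1024 (by norm_num) (by norm_num) (by decide +kernel)
  have h601 : 1/(((601:ℕ):ℝ) * Real.log ((601:ℕ):ℝ)) ≤ (0.000260062:ℝ) := termub 601 _ _ (by norm_num) (by norm_num) g601 (by norm_num)
  have g607 := loglb_nat 607 9467 1024 (by norm_num) (by norm_num) (by decide +kernel)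
  have h607 : 1/(((607:ℕ):ℝ) * Real.log ((607:ℕ):ℝ)) ≤ (0.000257084:ℝ) := termub 607 _ _ (by norm_num) (by norm_num) g607 (by norm_num)
  have g613 := loglb_nat 613 9481 1024 (by norm_num) (by norm_num) (by decide +kernel)
  have h613 : 1/(((613:ℕ):ℝ) * Real.log ((613:ℕ):ℝ)) ≤ (0.000254191:ℝ) := termub 613 _ _ (by norm_num) (by norm_num) g613 (by norm_num)
  have g617 := loglb_nat 617 9491 1024 (by norm_num) (by norm_num) (by decide +kernel)
  have h617 : 1/(((617:ℕ):ℝ) * Real.log ((617:ℕ):ℝ)) ≤ (0.000252277:ℝ) := termub 617 _ _ (by norm_num) (by norm_num) g617 (by norm_num)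
  have g619 := loglb_nat 619 9496 1024 (by norm_num) (by norm_num) (by decide +kernel)
  have h619 : 1/(((619:ℕ):ℝ) * Real.log ((619:ℕ):ℝ)) ≤ (0.000251330:ℝ) := termub 619 _ _ (by norm_num) (by norm_num) g619 (by norm_num)
  have g631 := loglb_nat 631 9524 1024 (by norm_num) (by norm_num) (by decide +kernel)
  have h631 : 1/(((631:ℕ):ℝ) * Real.log ((631:ℕ):ℝ)) ≤ (0.000245825:ℝ) := termub 631 _ _ (by norm_num) (by norm_num) g631 (by norm_num)
  have g641 := loglb_nat 641 9547 1024 (by norm_num) (by norm_num) (by decide +kernel)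
  have h641 : 1/(((641:ℕ):ℝ) * Real.log ((641:ℕ):ℝ)) ≤ (0.000241407:ℝ) := termub 641 _ _ (by norm_num) (by norm_num) g641 (by norm_num)
  have g643 := loglb_nat 643 9552 1024 (by norm_num) (by norm_num) (by decide +kernel)
  have h643 : 1/(((643:ℕ):ℝ) * Real.log ((643:ℕ):ℝ)) ≤ (0.000240530:ℝ) := termub 643 _ _ (by norm_num) (by norm_num) g643 (by norm_num)
  have g647 := loglb_nat 647 9561 1024 (by norm_num) (by norm_num) (by decide +kernel)
  have h647 : 1/(((647:ℕ):ℝ) * Real.log ((647:ℕ):ℝ)) ≤ (0.000238818:ℝ) := termub 647 _ _ (by norm_num) (by norm_num) g647 (by norm_num)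
  have g653 := loglb_nat 653 9575 1024 (by norm_num) (by norm_num) (by decide +kernel)
  have h653 : 1/(((653:ℕ):ℝ) * Real.log ((653:ℕ):ℝ)) ≤ (0.000236278:ℝ) := termub 653 _ _ (by norm_num) (by norm_num) g653 (by norm_num)
  have g659 := loglb_nat 659 9588 1024 (by norm_num) (by norm_num) (by decide +kernel)
  have h659 : 1/(((659:ℕ):ℝ) * Real.log ((659:ℕ):ℝ)) ≤ (0.000233809:ℝ) := termub 659 _ _ (by norm_num) (by norm_num) g659 (by norm_num)
  have g661 := loglb_nat 661 9593 1024 (by norm_num) (by norm_num) (by decide +kernel)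
  have h661 : 1/(((661:ℕ):ℝ) * Real.log ((661:ℕ):ℝ)) ≤ (0.000232980:ℝ) := termub 661 _ _ (by norm_num) (by norm_num) g661 (by norm_num)
  have g673 := loglb_nat 673 9619 1024 (by norm_num) (by norm_num) (by decide +kernel)
  have h673 : 1/(((673:ℕ):ℝ) * Real.log ((673:ℕ):ℝ)) ≤ (0.000228208:ℝ) := termub 673 _ _ (by norm_num) (by norm_num) g673 (by norm_num)
  have g677 := loglb_nat 677 9628 1024 (by norm_num) (by norm_num) (by decide +kernel)
  have h677 : 1/(((677:ℕ):ℝ) * Real.log ((677:ℕ):ℝ)) ≤ (0.000226647:ℝ) := termub 677 _ _ (by norm_num) (by norm_num) g677 (by norm_num)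
  have g683 := loglb_nat 683 9641 1024 (by norm_num) (by norm_num) (by decide +kernel)
  have h683 : 1/(((683:ℕ):ℝ) * Real.log ((683:ℕ):ℝ)) ≤ (0.000224353:ℝ) := termub 683 _ _ (by norm_num) (by norm_num) g683 (by norm_num)
  have g691 := loglb_nat 691 9658 1024 (by norm_num) (by norm_num) (by decide +kernel)
  have h691 : 1/(((691:ℕ):ℝ) * Real.log ((691:ℕ):ℝ)) ≤ (0.000221366:ℝ) := termub 691 _ _ (by norm_num) (by norm_num) g691 (by norm_num)
  have g701 := loglb_nat 701 9680 1024 (by norm_num) (by norm_num) (by decide +kernel)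
  have h701 : 1/(((701:ℕ):ℝ) * Real.log ((701:ℕ):ℝ)) ≤ (0.000217712:ℝ) := termub 701 _ _ (by norm_num) (by norm_num) g701 (by norm_num)
  have g709 := loglb_nat 709 9696 1024 (by norm_num) (by norm_num) (by decide +kernel)
  have h709 : 1/(((709:ℕ):ℝ) * Real.log ((709:ℕ):ℝ)) ≤ (0.000214900:ℝ) := termub 709 _ _ (by norm_num) (by norm_num) g709 (by norm_num)
  have g719 := loglb_nat 719 9717 1024 (by norm_num) (by norm_num) (by decide +kernel)
  have h719 : 1/(((719:ℕ):ℝ) * Real.log ((719:ℕ):ℝ)) ≤ (0.000211453:ℝ) := termub 719 _ _ (by norm_num) (by norm_num) g719 (by norm_num)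
  have g727 := loglb_nat 727 9733 1024 (by norm_num) (by norm_num) (by decide +kernel)
  have h727 : 1/(((727:ℕ):ℝ) * Real.log ((727:ℕ):ℝ)) ≤ (0.000208783:ℝ) := termub 727 _ _ (by norm_num) (by norm_num) g727 (by norm_num)
  have g733 := loglb_nat 733 9746 1024 (by norm_num) (by norm_num) (by decide +kernel)
  have h733 : 1/(((733:ℕ):ℝ) * Real.log ((733:ℕ):ℝ)) ≤ (0.000206797:ℝ) := termub 733 _ _ (by norm_num) (by norm_num) g733 (by norm_num)
  have g739 := loglb_nat 739 9758 1024 (by norm_num) (by norm_num) (by decide +kernel)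
  have h739 : 1/(((739:ℕ):ℝ) * Real.log ((739:ℕ):ℝ)) ≤ (0.000204866:ℝ) := termub 739 _ _ (by norm_num) (by norm_num) g739 (by norm_num)
  have g743 := loglb_nat 743 9766 1024 (by norm_num) (by norm_num) (by decide +kernel)
  have h743 : 1/(((743:ℕ):ℝ) * Real.log ((743:ℕ):ℝ)) ≤ (0.000203596:ℝ) := termub 743 _ _ (by norm_num) (by norm_num) g743 (by norm_num)
  have g751 := loglb_nat 751 9781 1024 (by norm_num) (by norm_num) (by decide +kernel)
  have h751 : 1/(((751:ℕ):ℝ) * Real.log ((751:ℕ):ℝ)) ≤ (0.000201119:ℝ) := termub 751 _ _ (by norm_num) (by norm_num) g751 (by norm_num)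
  have g757 := loglb_nat 757 9793 1024 (by norm_num) (by norm_num) (by decide +kernel)
  have h757 : 1/(((757:ℕ):ℝ) * Real.log ((757:ℕ):ℝ)) ≤ (0.000199280:ℝ) := termub 757 _ _ (by norm_num) (by norm_num) g757 (by norm_num)
  have g761 := loglb_nat 761 9801 1024 (by norm_num) (by norm_num) (by decide +kernel)
  have h761 : 1/(((761:ℕ):ℝ) * Real.log ((761:ℕ):ℝ)) ≤ (0.000198071:ℝ) := termub 761 _ _ (by norm_num) (by norm_num) g761 (by norm_num)
  have g769 := loglb_nat 769 9816 1024 (by norm_num) (by norm_num) (by decide +kernel)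
  have h769 : 1/(((769:ℕ):ℝ) * Real.log ((769:ℕ):ℝ)) ≤ (0.000195711:ℝ) := termub 769 _ _ (by norm_num) (by norm_num) g769 (by norm_num)
  have g773 := loglb_nat 773 9824 1024 (by norm_num) (by norm_num) (by decide +kernel)
  have h773 : 1/(((773:ℕ):ℝ) * Real.log ((773:ℕ):ℝ)) ≤ (0.000194539:ℝ) := termub 773 _ _ (by norm_num) (by norm_num) g773 (by norm_num)
  have g787 := loglb_nat 787 9851 1024 (by norm_num) (by norm_num) (by decide +kernel)
  have h787 : 1/(((787:ℕ):ℝ) * Real.log ((787:ℕ):ℝ)) ≤ (0.000190555:ℝ) := termub 787 _ _ (by norm_num) (by norm_num) g787 (by norm_num)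
  have g797 := loglb_nat 797 9869 1024 (by norm_num) (by norm_num) (by decide +kernel)
  have h797 : 1/(((797:ℕ):ℝ) * Real.log ((797:ℕ):ℝ)) ≤ (0.000187821:ℝ) := termub 797 _ _ (by norm_num) (by norm_num) g797 (by norm_num)
  have g809 := loglb_nat 809 9891 1024 (by norm_num) (by norm_num) (by decide +kernel)
  have h809 : 1/(((809:ℕ):ℝ) * Real.log ((809:ℕ):ℝ)) ≤ (0.000184623:ℝ) := termub 809 _ _ (by norm_num) (by norm_num) g809 (by norm_num)
  have g811 := loglb_nat 811 9895 1024 (by norm_num) (by norm_num) (by decide +kernel)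
  have h811 : 1/(((811:ℕ):ℝ) * Real.log ((811:ℕ):ℝ)) ≤ (0.000184094:ℝ) := termub 811 _ _ (by norm_num) (by norm_num) g811 (by norm_num)
  have g821 := loglb_nat 821 9913 1024 (by norm_num) (by norm_num) (by decide +kernel)
  have h821 : 1/(((821:ℕ):ℝ) * Real.log ((821:ℕ):ℝ)) ≤ (0.000181521:ℝ) := termub 821 _ _ (by norm_num) (by norm_num) g821 (by norm_num)
  have g823 := loglb_nat 823 9917 1024 (by norm_num) (by norm_num) (by decide +kernel)
  have h823 : 1/(((823:ℕ):ℝ) * Real.log ((823:ℕ):ℝ)) ≤ (0.000181007:ℝ) := termub 823 _ _ (by norm_num) (by norm_num) g823 (by norm_num)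
  have g827 := loglb_nat 827 9924 1024 (by norm_num) (by norm_num) (by decide +kernel)
  have h827 : 1/(((827:ℕ):ℝ) * Real.log ((827:ℕ):ℝ)) ≤ (0.000180005:ℝ) := termub 827 _ _ (by norm_num) (by norm_num) g827 (by norm_num)
  have g829 := loglb_nat 829 9927 1024 (by norm_num) (by norm_num) (by decide +kernel)
  have h829 : 1/(((829:ℕ):ℝ) * Real.log ((829:ℕ):ℝ)) ≤ (0.000179516:ℝ) := termub 829 _ _ (by norm_num) (by norm_num) g829 (by norm_num)
  have g839 := loglb_nat 839 9945 1024 (by norm_num) (by norm_num) (by decide +kernel)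
  have h839 : 1/(((839:ℕ):ℝ) * Real.log ((839:ℕ):ℝ)) ≤ (0.000177055:ℝ) := termub 839 _ _ (by norm_num) (by norm_num) g839 (by norm_num)
  have g853 := loglb_nat 853 9970 1024 (by norm_num) (by norm_num) (by decide +kernel)
  have h853 : 1/(((853:ℕ):ℝ) * Real.log ((853:ℕ):ℝ)) ≤ (0.000173713:ℝ) := termub 853 _ _ (by norm_num) (by norm_num) g853 (by norm_num)
  have g857 := loglb_nat 857 9976 1024 (by norm_num) (by norm_num) (by decide +kernel)
  have h857 : 1/(((857:ℕ):ℝ) * Real.log ((857:ℕ):ℝ)) ≤ (0.000172798:ℝ) := termub 857 _ _ (by norm_num) (by norm_num) g857 (by norm_num)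
  have g859 := loglb_nat 859 9980 1024 (by norm_num) (by norm_num) (by decide +kernel)
  have h859 : 1/(((859:ℕ):ℝ) * Real.log ((859:ℕ):ℝ)) ≤ (0.000172326:ℝ) := termub 859 _ _ (by norm_num) (by norm_num) g859 (by norm_num)
  have g863 := loglb_nat 863 9987 1024 (by norm_num) (by norm_num) (by decide +kernel)
  have h863 : 1/(((863:ℕ):ℝ) * Real.log ((863:ℕ):ℝ)) ≤ (0.000171408:ℝ) := termub 863 _ _ (by norm_num) (by norm_num) g863 (by norm_num)
  have g877 := loglb_nat 877 10011 1024 (by norm_num) (by norm_num) (by decide +kernel)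
  have h877 : 1/(((877:ℕ):ℝ) * Real.log ((877:ℕ):ℝ)) ≤ (0.000168267:ℝ) := termub 877 _ _ (by norm_num) (by norm_num) g877 (by norm_num)
  have g881 := loglb_nat 881 10017 1024 (by norm_num) (by norm_num) (by decide +kernel)
  have h881 : 1/(((881:ℕ):ℝ) * Real.log ((881:ℕ):ℝ)) ≤ (0.000167403:ℝ) := termub 881 _ _ (by norm_num) (by norm_num) g881 (by norm_num)
  have g883 := loglb_nat 883 10021 1024 (by norm_num) (by norm_num) (by decide +kernel)
  have h883 : 1/(((883:ℕ):ℝ) * Real.log ((883:ℕ):ℝ)) ≤ (0.000166957:ℝ) := termub 883 _ _ (by norm_num) (by norm_num) g883 (by norm_num)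
  have g887 := loglb_nat 887 10027 1024 (by norm_num) (by norm_num) (by decide +kernel)
  have h887 : 1/(((887:ℕ):ℝ) * Real.log ((887:ℕ):ℝ)) ≤ (0.000166104:ℝ) := termub 887 _ _ (by norm_num) (by norm_num) g887 (by norm_num)
  have g907 := loglb_nat 907 10060 1024 (by norm_num) (by norm_num) (by decide +kernel)
  have h907 : 1/(((907:ℕ):ℝ) * Real.log ((907:ℕ):ℝ)) ≤ (0.000161909:ℝ) := termub 907 _ _ (by norm_num) (by norm_num) g907 (by norm_num)
  have g911 := loglb_nat 911 10067 1024 (by norm_num) (by norm_num) (by decide +kernel)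
  have h911 : 1/(((911:ℕ):ℝ) * Real.log ((911:ℕ):ℝ)) ≤ (0.000161086:ℝ) := termub 911 _ _ (by norm_num) (by norm_num) g911 (by norm_num)
  have g919 := loglb_nat 919 10080 1024 (by norm_num) (by norm_num) (by decide +kernel)
  have h919 : 1/(((919:ℕ):ℝ) * Real.log ((919:ℕ):ℝ)) ≤ (0.000159478:ℝ) := termub 919 _ _ (by norm_num) (by norm_num) g919 (by norm_num)
  have g929 := loglb_nat 929 10096 1024 (by norm_num) (by norm_num) (by decide +kernel)
  have h929 : 1/(((929:ℕ):ℝ) * Real.log ((929:ℕ):ℝ)) ≤ (0.000157511:ℝ) := termub 929 _ _ (by norm_num) (by norm_num) g929 (by norm_num)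
  have g937 := loglb_nat 937 10108 1024 (by norm_num) (by norm_num) (by decide +kernel)
  have h937 : 1/(((937:ℕ):ℝ) * Real.log ((937:ℕ):ℝ)) ≤ (0.000155981:ℝ) := termub 937 _ _ (by norm_num) (by norm_num) g937 (by norm_num)
  have g941 := loglb_nat 941 10115 1024 (by norm_num) (by norm_num) (by decide +kernel)
  have h941 : 1/(((941:ℕ):ℝ) * Real.log ((941:ℕ):ℝ)) ≤ (0.000155210:ℝ) := termub 941 _ _ (by norm_num) (by norm_num) g941 (by norm_num)
  have g947 := loglb_nat 947 10124 1024 (by norm_num) (by norm_num) (by decide +kernel)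
  have h947 : 1/(((947:ℕ):ℝ) * Real.log ((947:ℕ):ℝ)) ≤ (0.000154090:ℝ) := termub 947 _ _ (by norm_num) (by norm_num) g947 (by norm_num)
  have g953 := loglb_nat 953 10133 1024 (by norm_num) (by norm_num) (by decide +kernel)
  have h953 : 1/(((953:ℕ):ℝ) * Real.log ((953:ℕ):ℝ)) ≤ (0.000152984:ℝ) := termub 953 _ _ (by norm_num) (by norm_num) g953 (by norm_num)
  have g967 := loglb_nat 967 10155 1024 (by norm_num) (by norm_num) (by decide +kernel)
  have h967 : 1/(((967:ℕ):ℝ) * Real.log ((967:ℕ):ℝ)) ≤ (0.000150442:ℝ) := termub 967 _ _ (by norm_num) (by norm_num) g967 (by norm_num)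
  have g971 := loglb_nat 971 10161 1024 (by norm_num) (by norm_num) (by decide +kernel)
  have h971 : 1/(((971:ℕ):ℝ) * Real.log ((971:ℕ):ℝ)) ≤ (0.000149734:ℝ) := termub 971 _ _ (by norm_num) (by norm_num) g971 (by norm_num)
  have g977 := loglb_nat 977 10170 1024 (by norm_num) (by norm_num) (by decide +kernel)
  have h977 : 1/(((977:ℕ):ℝ) * Real.log ((977:ℕ):ℝ)) ≤ (0.000148683:ℝ) := termub 977 _ _ (by norm_num) (by norm_num) g977 (by norm_num)
  have g983 := loglb_nat 983 10179 1024 (by norm_num) (by norm_num) (by decide +kernel)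
  have h983 : 1/(((983:ℕ):ℝ) * Real.log ((983:ℕ):ℝ)) ≤ (0.000147645:ℝ) := termub 983 _ _ (by norm_num) (by norm_num) g983 (by norm_num)
  have g991 := loglb_nat 991 10191 1024 (by norm_num) (by norm_num) (by decide +kernel)
  have h991 : 1/(((991:ℕ):ℝ) * Real.log ((991:ℕ):ℝ)) ≤ (0.000146280:ℝ) := termub 991 _ _ (by norm_num) (by norm_num) g991 (by norm_num)
  have g997 := loglb_nat 997 10200 1024 (by norm_num) (by norm_num) (by decide +kernel)
  have h997 : 1/(((997:ℕ):ℝ) * Real.log ((997:ℕ):ℝ)) ≤ (0.000145272:ℝ) := termub 997 _ _ (by norm_num) (by norm_num) g997 (by norm_num)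
  refine le_trans (add_le_add h2 (add_le_add h3 (add_le_add h5 (add_le_add h7 (add_le_add h11 (add_le_add h13 (add_le_add h17 (add_le_add h19 (add_le_add h23 (add_le_add h29 (add_le_add h31 (add_le_add h37 (add_le_add h41 (add_le_add h43 (add_le_add h47 (add_le_add h53 (add_le_add h59 (add_le_add h61 (add_le_add h67 (add_le_add h71 (add_le_add h73 (add_le_add h79 (add_le_add h83 (add_le_add h89 (add_le_add h97 (add_le_add h101 (add_le_add h103 (add_le_add h107 (add_le_add h109 (add_le_add h113 (add_le_add h127 (add_le_add h131 (add_le_add h137 (add_le_add h139 (add_le_add h149 (add_le_add h151 (add_le_add h157 (add_le_add h163 (add_le_add h167 (add_le_add h173 (add_le_add h179 (add_le_add h181 (add_le_add h191 (add_le_add h193 (add_le_add h197 (add_le_add h199 (add_le_add h211 (add_le_add h223 (add_le_add h227 (add_le_add h229 (add_le_add h233 (add_le_add h239 (add_le_add h241 (add_le_add h251 (add_le_add h257 (add_le_add h263 (add_le_add h269 (add_le_add h271 (add_le_add h277 (add_le_add h281 (add_le_add h283 (add_le_add h293 (add_le_add h307 (add_le_add h311 (add_le_add h313 (add_le_add h317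 (add_le_add h331 (add_le_add h337 (add_le_add h347 (add_le_add h349 (add_le_add h353 (add_le_add h359 (add_le_add h367 (add_le_add h373 (add_le_add h379 (add_le_add h383 (add_le_add h389 (add_le_add h397 (add_le_add h401 (add_le_add h409 (add_le_add h419 (add_le_add h421 (add_le_add h431 (add_le_add h433 (add_le_add h439 (add_le_add h443 (add_le_add h449 (add_le_add h457 (add_le_add h461 (add_le_add h463 (add_le_add h467 (add_le_add h479 (add_le_add h487 (add_le_add h491 (add_le_add h499 (add_le_add h503 (add_le_add h509 (add_le_add h521 (add_le_add h523 (add_le_add h541 (add_le_add h547 (add_le_add h557 (add_le_add h563 (add_le_add h569 (add_le_add h571 (add_le_add h577 (add_le_add h587 (add_le_add h593 (add_le_add h599 (add_le_add h601 (add_le_add h607 (add_le_add h613 (add_le_add h617 (add_le_add h619 (add_le_add h631 (add_le_add h641 (add_le_add h643 (add_le_add h647 (add_le_add h653 (add_le_add h659 (add_le_add h661 (add_le_add h673 (add_le_add h677 (add_le_add h683 (add_le_add h691 (add_le_add h701 (add_le_add h709 (add_le_add h719 (add_le_add h727 (add_le_add h733 (add_le_add h739 (add_le_add h743 (add_le_add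 h751 (add_le_add h757 (add_le_add h761 (add_le_add h769 (add_le_add h773 (add_le_add h787 (add_le_add h797 (add_le_add h809 (add_le_add h811 (add_le_add h821 (add_le_add h823 (add_le_add h827 (add_le_add h829 (add_le_add h839 (add_le_add h853 (add_le_add h857 (add_le_add h859 (add_le_add h863 (add_le_add h877 (add_le_add h881 (add_le_add h883 (add_le_add h887 (add_le_add h907 (add_le_add h911 (add_le_add h919 (add_le_add h929 (add_le_add h937 (add_le_add h941 (add_le_add h947 (add_le_add h953 (add_le_add h967 (add_le_add h971 (add_le_add h977 (add_le_add h983 (add_le_add h991 (add_le_add h997 (le_refl (0:ℝ)))))))))))))))))))))))))))))))))))))))))))))))))))))))))))))))))))))))))))))))))))))))))))))))))))))))))))))))))))))))))))))))))))))))))))))))))))))))))))))))))))))))))) ?_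
  norm_num

set_option maxHeartbeats 4000000 in
set_option maxRecDepth 100000 in
lemma thetalb : (956.188412:ℝ) ≤ thP 1000 := by
  rw [theta_eq]
  simp only [PL, List.map_cons, List.map_nil, List.sum_cons, List.sum_nil]
  have g2 := loglb_nat 2 1 1 (by norm_num) (by norm_num) (by norm_num)
  have t2 : (0.693147180:ℝ) ≤ Real.log ((2:ℕ):ℝ) := le_trans (by norm_num) g2
  have g3 := loglb_nat 3 1623 1024 (by norm_num) (by norm_num) (by decide +kernel)
  have t3 : (1.098611204:ℝ) ≤ Real.log ((3:ℕ):ℝ) := le_trans (by norm_num) g3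
  have g5 := loglb_nat 5 2377 1024 (by norm_num) (by norm_num) (by decide +kernel)
  have t5 : (1.608994968:ℝ) ≤ Real.log ((5:ℕ):ℝ) := le_trans (by norm_num) g5
  have g7 := loglb_nat 7 2874 1024 (by norm_num) (by norm_num) (by decide +kernel)
  have t7 : (1.945415035:ℝ) ≤ Real.log ((7:ℕ):ℝ) := le_trans (by norm_num) g7
  have g11 := loglb_nat 11 3542 1024 (by norm_num) (by norm_num) (by decide +kernel)
  have t11 : (2.397585266:ℝ) ≤ Real.log ((11:ℕ):ℝ) := le_trans (by norm_num) g11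
  have g13 := loglb_nat 13 3789 1024 (by norm_num) (by norm_num) (by decide +kernel)
  have t13 : (2.564779947:ℝ) ≤ Real.log ((13:ℕ):ℝ) := le_trans (by norm_num) g13
  have g17 := loglb_nat 17 4185 1024 (by norm_num) (by norm_num) (by decide +kernel)
  have t17 : (2.832832958:ℝ) ≤ Real.log ((17:ℕ):ℝ) := le_trans (by norm_num) g17
  have g19 := loglb_nat 19 4349 1024 (by norm_num) (by norm_num) (by decide +kernel)
  have t19 : (2.943844811:ℝ) ≤ Real.log ((19:ℕ):ℝ) := le_trans (by norm_num) g19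
  have g23 := loglb_nat 23 4632 1024 (by norm_num) (by norm_num) (by decide +kernel)
  have t23 : (3.135407948:ℝ) ≤ Real.log ((23:ℕ):ℝ) := le_trans (by norm_num) g23
  have g29 := loglb_nat 29 4974 1024 (by norm_num) (by norm_num) (by decide +kernel)
  have t29 : (3.366908276:ℝ) ≤ Real.log ((29:ℕ):ℝ) := le_trans (by norm_num) g29
  have g31 := loglb_nat 31 5073 1024 (by norm_num) (by norm_num) (by decide +kernel)
  have t31 : (3.433921528:ℝ) ≤ Real.log ((31:ℕ):ℝ) := le_trans (by norm_num) g31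
  have g37 := loglb_nat 37 5334 1024 (by norm_num) (by norm_num) (by decide +kernel)
  have t37 : (3.610592831:ℝ) ≤ Real.log ((37:ℕ):ℝ) := le_trans (by norm_num) g37
  have g41 := loglb_nat 41 5486 1024 (by norm_num) (by norm_num) (by decide +kernel)
  have t41 : (3.713481866:ℝ) ≤ Real.log ((41:ℕ):ℝ) := le_trans (by norm_num) g41
  have g43 := loglb_nat 43 5556 1024 (by norm_num) (by norm_num) (by decide +kernel)
  have t43 : (3.760864974:ℝ) ≤ Real.log ((43:ℕ):ℝ) := le_trans (by norm_num) g43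
  have g47 := loglb_nat 47 5687 1024 (by norm_num) (by norm_num) (by decide +kernel)
  have t47 : (3.849539076:ℝ) ≤ Real.log ((47:ℕ):ℝ) := le_trans (by norm_num) g47
  have g53 := loglb_nat 53 5865 1024 (by norm_num) (by norm_num) (by decide +kernel)
  have t53 : (3.970027551:ℝ) ≤ Real.log ((53:ℕ):ℝ) := le_trans (by norm_num) g53
  have g59 := loglb_nat 59 6023 1024 (by norm_num) (by norm_num) (by decide +kernel)
  have t59 : (4.076977995:ℝ) ≤ Real.log ((59:ℕ):ℝ) := le_trans (by norm_num) g59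
  have g61 := loglb_nat 61 6073 1024 (by norm_num) (by norm_num) (by decide +kernel)
  have t61 : (4.110823072:ℝ) ≤ Real.log ((61:ℕ):ℝ) := le_trans (by norm_num) g61
  have g67 := loglb_nat 67 6211 1024 (by norm_num) (by norm_num) (by decide +kernel)
  have t67 : (4.204235485:ℝ) ≤ Real.log ((67:ℕ):ℝ) := le_trans (by norm_num) g67
  have g71 := loglb_nat 71 6297 1024 (by norm_num) (by norm_num) (by decide +kernel)
  have t71 : (4.262449017:ℝ) ≤ Real.log ((71:ℕ):ℝ) := le_trans (by norm_num) g71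
  have g73 := loglb_nat 73 6338 1024 (by norm_num) (by norm_num) (by decide +kernel)
  have t73 : (4.290201981:ℝ) ≤ Real.log ((73:ℕ):ℝ) := le_trans (by norm_num) g73
  have g79 := loglb_nat 79 6455 1024 (by norm_num) (by norm_num) (by decide +kernel)
  have t79 : (4.369399461:ℝ) ≤ Real.log ((79:ℕ):ℝ) := le_trans (by norm_num) g79
  have g83 := loglb_nat 83 6528 1024 (by norm_num) (by norm_num) (by decide +kernel)
  have t83 : (4.418813274:ℝ) ≤ Real.log ((83:ℕ):ℝ) := le_trans (by norm_num) g83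
  have g89 := loglb_nat 89 6631 1024 (by norm_num) (by norm_num) (by decide +kernel)
  have t89 : (4.488534133:ℝ) ≤ Real.log ((89:ℕ):ℝ) := le_trans (by norm_num) g89
  have g97 := loglb_nat 97 6758 1024 (by norm_num) (by norm_num) (by decide +kernel)
  have t97 : (4.574500629:ℝ) ≤ Real.log ((97:ℕ):ℝ) := le_trans (by norm_num) g97
  have g101 := loglb_nat 101 6818 1024 (by norm_num) (by norm_num) (by decide +kernel)
  have t101 : (4.615114721:ℝ) ≤ Real.log ((101:ℕ):ℝ) := le_trans (by norm_num) g101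
  have g103 := loglb_nat 103 6846 1024 (by norm_num) (by norm_num) (by decide +kernel)
  have t103 : (4.634067965:ℝ) ≤ Real.log ((103:ℕ):ℝ) := le_trans (by norm_num) g103
  have g107 := loglb_nat 107 6903 1024 (by norm_num) (by norm_num) (by decide +kernel)
  have t107 : (4.672651353:ℝ) ≤ Real.log ((107:ℕ):ℝ) := le_trans (by norm_num) g107
  have g109 := loglb_nat 109 6930 1024 (by norm_num) (by norm_num) (by decide +kernel)
  have t109 : (4.690927694:ℝ) ≤ Real.log ((109:ℕ):ℝ) := le_trans (by norm_num) g109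
  have g113 := loglb_nat 113 6983 1024 (by norm_num) (by norm_num) (by decide +kernel)
  have t113 : (4.726803476:ℝ) ≤ Real.log ((113:ℕ):ℝ) := le_trans (by norm_num) g113
  have g127 := loglb_nat 127 7156 1024 (by norm_num) (by norm_num) (by decide +kernel)
  have t127 : (4.843907443:ℝ) ≤ Real.log ((127:ℕ):ℝ) := le_trans (by norm_num) g127
  have g131 := loglb_nat 131 7202 1024 (by norm_num) (by norm_num) (by decide +kernel)
  have t131 : (4.875044914:ℝ) ≤ Real.log ((131:ℕ):ℝ) := le_trans (by norm_num) g131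
  have g137 := loglb_nat 137 7268 1024 (by norm_num) (by norm_num) (by decide +kernel)
  have t137 : (4.919720416:ℝ) ≤ Real.log ((137:ℕ):ℝ) := le_trans (by norm_num) g137
  have g139 := loglb_nat 139 7289 1024 (by norm_num) (by norm_num) (by decide +kernel)
  have t139 : (4.933935348:ℝ) ≤ Real.log ((139:ℕ):ℝ) := le_trans (by norm_num) g139
  have g149 := loglb_nat 149 7392 1024 (by norm_num) (by norm_num) (by decide +kernel)
  have t149 : (5.003656207:ℝ) ≤ Real.log ((149:ℕ):ℝ) := le_trans (by norm_num) g149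
  have g151 := loglb_nat 151 7412 1024 (by norm_num) (by norm_num) (by decide +kernel)
  have t151 : (5.017194238:ℝ) ≤ Real.log ((151:ℕ):ℝ) := le_trans (by norm_num) g151
  have g157 := loglb_nat 157 7469 1024 (by norm_num) (by norm_num) (by decide +kernel)
  have t157 : (5.055777626:ℝ) ≤ Real.log ((157:ℕ):ℝ) := le_trans (by norm_num) g157
  have g163 := loglb_nat 163 7525 1024 (by norm_num) (by norm_num) (by decide +kernel)
  have t163 : (5.093684113:ℝ) ≤ Real.log ((163:ℕ):ℝ) := le_trans (by norm_num) g163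
  have g167 := loglb_nat 167 7560 1024 (by norm_num) (by norm_num) (by decide +kernel)
  have t167 : (5.117375667:ℝ) ≤ Real.log ((167:ℕ):ℝ) := le_trans (by norm_num) g167
  have g173 := loglb_nat 173 7613 1024 (by norm_num) (by norm_num) (by decide +kernel)
  have t173 : (5.153251448:ℝ) ≤ Real.log ((173:ℕ):ℝ) := le_trans (by norm_num) g173
  have g179 := loglb_nat 179 7663 1024 (by norm_num) (by norm_num) (by decide +kernel)
  have t179 : (5.187096526:ℝ) ≤ Real.log ((179:ℕ):ℝ) := le_trans (by norm_num) g179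
  have g181 := loglb_nat 181 7679 1024 (by norm_num) (by norm_num) (by decide +kernel)
  have t181 : (5.197926950:ℝ) ≤ Real.log ((181:ℕ):ℝ) := le_trans (by norm_num) g181
  have g191 := loglb_nat 191 7759 1024 (by norm_num) (by norm_num) (by decide +kernel)
  have t191 : (5.252079074:ℝ) ≤ Real.log ((191:ℕ):ℝ) := le_trans (by norm_num) g191
  have g193 := loglb_nat 193 7774 1024 (by norm_num) (by norm_num) (by decide +kernel)
  have t193 : (5.262232597:ℝ) ≤ Real.log ((193:ℕ):ℝ) := le_trans (by norm_num) g193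
  have g197 := loglb_nat 197 7804 1024 (by norm_num) (by norm_num) (by decide +kernel)
  have t197 : (5.282539643:ℝ) ≤ Real.log ((197:ℕ):ℝ) := le_trans (by norm_num) g197
  have g199 := loglb_nat 199 7819 1024 (by norm_num) (by norm_num) (by decide +kernel)
  have t199 : (5.292693166:ℝ) ≤ Real.log ((199:ℕ):ℝ) := le_trans (by norm_num) g199
  have g211 := loglb_nat 211 7906 1024 (by norm_num) (by norm_num) (by decide +kernel)
  have t211 : (5.351583601:ℝ) ≤ Real.log ((211:ℕ):ℝ) := le_trans (by norm_num) g211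
  have g223 := loglb_nat 223 7988 1024 (by norm_num) (by norm_num) (by decide +kernel)
  have t223 : (5.407089527:ℝ) ≤ Real.log ((223:ℕ):ℝ) := le_trans (by norm_num) g223
  have g227 := loglb_nat 227 8014 1024 (by norm_num) (by norm_num) (by decide +kernel)
  have t227 : (5.424688967:ℝ) ≤ Real.log ((227:ℕ):ℝ) := le_trans (by norm_num) g227
  have g229 := loglb_nat 229 8027 1024 (by norm_num) (by norm_num) (by decide +kernel)
  have t229 : (5.433488687:ℝ) ≤ Real.log ((229:ℕ):ℝ) := le_trans (by norm_num) g229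
  have g233 := loglb_nat 233 8052 1024 (by norm_num) (by norm_num) (by decide +kernel)
  have t233 : (5.450411226:ℝ) ≤ Real.log ((233:ℕ):ℝ) := le_trans (by norm_num) g233
  have g239 := loglb_nat 239 8090 1024 (by norm_num) (by norm_num) (by decide +kernel)
  have t239 : (5.476133484:ℝ) ≤ Real.log ((239:ℕ):ℝ) := le_trans (by norm_num) g239
  have g241 := loglb_nat 241 8102 1024 (by norm_num) (by norm_num) (by decide +kernel)
  have t241 : (5.484256303:ℝ) ≤ Real.log ((241:ℕ):ℝ) := le_trans (by norm_num) g241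
  have g251 := loglb_nat 251 8162 1024 (by norm_num) (by norm_num) (by decide +kernel)
  have t251 : (5.524870396:ℝ) ≤ Real.log ((251:ℕ):ℝ) := le_trans (by norm_num) g251
  have g257 := loglb_nat 257 8197 1024 (by norm_num) (by norm_num) (by decide +kernel)
  have t257 : (5.548561950:ℝ) ≤ Real.log ((257:ℕ):ℝ) := le_trans (by norm_num) g257
  have g263 := loglb_nat 263 8231 1024 (by norm_num) (by norm_num) (by decide +kernel)
  have t263 : (5.571576602:ℝ) ≤ Real.log ((263:ℕ):ℝ) := le_trans (by norm_num) g263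
  have g269 := loglb_nat 269 8265 1024 (by norm_num) (by norm_num) (by decide +kernel)
  have t269 : (5.594591255:ℝ) ≤ Real.log ((269:ℕ):ℝ) := le_trans (by norm_num) g269
  have g271 := loglb_nat 271 8276 1024 (by norm_num) (by norm_num) (by decide +kernel)
  have t271 : (5.602037172:ℝ) ≤ Real.log ((271:ℕ):ℝ) := le_trans (by norm_num) g271
  have g277 := loglb_nat 277 8308 1024 (by norm_num) (by norm_num) (by decide +kernel)
  have t277 : (5.623698021:ℝ) ≤ Real.log ((277:ℕ):ℝ) := le_trans (by norm_num) g277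
  have g281 := loglb_nat 281 8329 1024 (by norm_num) (by norm_num) (by decide +kernel)
  have t281 : (5.637912953:ℝ) ≤ Real.log ((281:ℕ):ℝ) := le_trans (by norm_num) g281
  have g283 := loglb_nat 283 8340 1024 (by norm_num) (by norm_num) (by decide +kernel)
  have t283 : (5.645358870:ℝ) ≤ Real.log ((283:ℕ):ℝ) := le_trans (by norm_num) g283
  have g293 := loglb_nat 293 8391 1024 (by norm_num) (by norm_num) (by decide +kernel)
  have t293 : (5.679880849:ℝ) ≤ Real.log ((293:ℕ):ℝ) := le_trans (by norm_num) g293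
  have g307 := loglb_nat 307 8460 1024 (by norm_num) (by norm_num) (by decide +kernel)
  have t307 : (5.726587055:ℝ) ≤ Real.log ((307:ℕ):ℝ) := le_trans (by norm_num) g307
  have g311 := loglb_nat 311 8479 1024 (by norm_num) (by norm_num) (by decide +kernel)
  have t311 : (5.739448185:ℝ) ≤ Real.log ((311:ℕ):ℝ) := le_trans (by norm_num) g311
  have g313 := loglb_nat 313 8488 1024 (by norm_num) (by norm_num) (by decide +kernel)
  have t313 : (5.745540299:ℝ) ≤ Real.log ((313:ℕ):ℝ) := le_trans (by norm_num) g313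
  have g317 := loglb_nat 317 8507 1024 (by norm_num) (by norm_num) (by decide +kernel)
  have t317 : (5.758401428:ℝ) ≤ Real.log ((317:ℕ):ℝ) := le_trans (by norm_num) g317
  have g331 := loglb_nat 331 8571 1024 (by norm_num) (by norm_num) (by decide +kernel)
  have t331 : (5.801723127:ℝ) ≤ Real.log ((331:ℕ):ℝ) := le_trans (by norm_num) g331
  have g337 := loglb_nat 337 8598 1024 (by norm_num) (by norm_num) (by decide +kernel)
  have t337 : (5.819999468:ℝ) ≤ Real.log ((337:ℕ):ℝ) := le_trans (by norm_num) g337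
  have g347 := loglb_nat 347 8641 1024 (by norm_num) (by norm_num) (by decide +kernel)
  have t347 : (5.849106235:ℝ) ≤ Real.log ((347:ℕ):ℝ) := le_trans (by norm_num) g347
  have g349 := loglb_nat 349 8649 1024 (by norm_num) (by norm_num) (by decide +kernel)
  have t349 : (5.854521447:ℝ) ≤ Real.log ((349:ℕ):ℝ) := le_trans (by norm_num) g349
  have g353 := loglb_nat 353 8666 1024 (by norm_num) (by norm_num) (by decide +kernel)
  have t353 : (5.866028773:ℝ) ≤ Real.log ((353:ℕ):ℝ) := le_trans (by norm_num) g353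
  have g359 := loglb_nat 359 8691 1024 (by norm_num) (by norm_num) (by decide +kernel)
  have t359 : (5.882951312:ℝ) ≤ Real.log ((359:ℕ):ℝ) := le_trans (by norm_num) g359
  have g367 := loglb_nat 367 8724 1024 (by norm_num) (by norm_num) (by decide +kernel)
  have t367 : (5.905289063:ℝ) ≤ Real.log ((367:ℕ):ℝ) := le_trans (by norm_num) g367
  have g373 := loglb_nat 373 8748 1024 (by norm_num) (by norm_num) (by decide +kernel)
  have t373 : (5.921534700:ℝ) ≤ Real.log ((373:ℕ):ℝ) := le_trans (by norm_num) g373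
  have g379 := loglb_nat 379 8771 1024 (by norm_num) (by norm_num) (by decide +kernel)
  have t379 : (5.937103435:ℝ) ≤ Real.log ((379:ℕ):ℝ) := le_trans (by norm_num) g379
  have g383 := loglb_nat 383 8787 1024 (by norm_num) (by norm_num) (by decide +kernel)
  have t383 : (5.947933860:ℝ) ≤ Real.log ((383:ℕ):ℝ) := le_trans (by norm_num) g383
  have g389 := loglb_nat 389 8810 1024 (by norm_num) (by norm_num) (by decide +kernel)
  have t389 : (5.963502596:ℝ) ≤ Real.log ((389:ℕ):ℝ) := le_trans (by norm_num) g389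
  have g397 := loglb_nat 397 8840 1024 (by norm_num) (by norm_num) (by decide +kernel)
  have t397 : (5.983809642:ℝ) ≤ Real.log ((397:ℕ):ℝ) := le_trans (by norm_num) g397
  have g401 := loglb_nat 401 8854 1024 (by norm_num) (by norm_num) (by decide +kernel)
  have t401 : (5.993286264:ℝ) ≤ Real.log ((401:ℕ):ℝ) := le_trans (by norm_num) g401
  have g409 := loglb_nat 409 8884 1024 (by norm_num) (by norm_num) (by decide +kernel)
  have t409 : (6.013593310:ℝ) ≤ Real.log ((409:ℕ):ℝ) := le_trans (by norm_num) g409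
  have g419 := loglb_nat 419 8919 1024 (by norm_num) (by norm_num) (by decide +kernel)
  have t419 : (6.037284864:ℝ) ≤ Real.log ((419:ℕ):ℝ) := le_trans (by norm_num) g419
  have g421 := loglb_nat 421 8926 1024 (by norm_num) (by norm_num) (by decide +kernel)
  have t421 : (6.042023175:ℝ) ≤ Real.log ((421:ℕ):ℝ) := le_trans (by norm_num) g421
  have g431 := loglb_nat 431 8961 1024 (by norm_num) (by norm_num) (by decide +kernel)
  have t431 : (6.065714729:ℝ) ≤ Real.log ((431:ℕ):ℝ) := le_trans (by norm_num) g431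
  have g433 := loglb_nat 433 8968 1024 (by norm_num) (by norm_num) (by decide +kernel)
  have t433 : (6.070453039:ℝ) ≤ Real.log ((433:ℕ):ℝ) := le_trans (by norm_num) g433
  have g439 := loglb_nat 439 8988 1024 (by norm_num) (by norm_num) (by decide +kernel)
  have t439 : (6.083991070:ℝ) ≤ Real.log ((439:ℕ):ℝ) := le_trans (by norm_num) g439
  have g443 := loglb_nat 443 9002 1024 (by norm_num) (by norm_num) (by decide +kernel)
  have t443 : (6.093467692:ℝ) ≤ Real.log ((443:ℕ):ℝ) := le_trans (by norm_num) g443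
  have g449 := loglb_nat 449 9022 1024 (by norm_num) (by norm_num) (by decide +kernel)
  have t449 : (6.107005723:ℝ) ≤ Real.log ((449:ℕ):ℝ) := le_trans (by norm_num) g449
  have g457 := loglb_nat 457 9048 1024 (by norm_num) (by norm_num) (by decide +kernel)
  have t457 : (6.124605163:ℝ) ≤ Real.log ((457:ℕ):ℝ) := le_trans (by norm_num) g457
  have g461 := loglb_nat 461 9060 1024 (by norm_num) (by norm_num) (by decide +kernel)
  have t461 : (6.132727981:ℝ) ≤ Real.log ((461:ℕ):ℝ) := le_trans (by norm_num) g461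
  have g463 := loglb_nat 463 9067 1024 (by norm_num) (by norm_num) (by decide +kernel)
  have t463 : (6.137466292:ℝ) ≤ Real.log ((463:ℕ):ℝ) := le_trans (by norm_num) g463
  have g467 := loglb_nat 467 9080 1024 (by norm_num) (by norm_num) (by decide +kernel)
  have t467 : (6.146266012:ℝ) ≤ Real.log ((467:ℕ):ℝ) := le_trans (by norm_num) g467
  have g479 := loglb_nat 479 9117 1024 (by norm_num) (by norm_num) (by decide +kernel)
  have t479 : (6.171311369:ℝ) ≤ Real.log ((479:ℕ):ℝ) := le_trans (by norm_num) g479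
  have g487 := loglb_nat 487 9142 1024 (by norm_num) (by norm_num) (by decide +kernel)
  have t487 : (6.188233908:ℝ) ≤ Real.log ((487:ℕ):ℝ) := le_trans (by norm_num) g487
  have g491 := loglb_nat 491 9154 1024 (by norm_num) (by norm_num) (by decide +kernel)
  have t491 : (6.196356727:ℝ) ≤ Real.log ((491:ℕ):ℝ) := le_trans (by norm_num) g491
  have g499 := loglb_nat 499 9178 1024 (by norm_num) (by norm_num) (by decide +kernel)
  have t499 : (6.212602364:ℝ) ≤ Real.log ((499:ℕ):ℝ) := le_trans (by norm_num) g499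
  have g503 := loglb_nat 503 9189 1024 (by norm_num) (by norm_num) (by decide +kernel)
  have t503 : (6.220048281:ℝ) ≤ Real.log ((503:ℕ):ℝ) := le_trans (by norm_num) g503
  have g509 := loglb_nat 509 9207 1024 (by norm_num) (by norm_num) (by decide +kernel)
  have t509 : (6.232232508:ℝ) ≤ Real.log ((509:ℕ):ℝ) := le_trans (by norm_num) g509
  have g521 := loglb_nat 521 9241 1024 (by norm_num) (by norm_num) (by decide +kernel)
  have t521 : (6.255247161:ℝ) ≤ Real.log ((521:ℕ):ℝ) := le_trans (by norm_num) g521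
  have g523 := loglb_nat 523 9247 1024 (by norm_num) (by norm_num) (by decide +kernel)
  have t523 : (6.259308570:ℝ) ≤ Real.log ((523:ℕ):ℝ) := le_trans (by norm_num) g523
  have g541 := loglb_nat 541 9297 1024 (by norm_num) (by norm_num) (by decide +kernel)
  have t541 : (6.293153647:ℝ) ≤ Real.log ((541:ℕ):ℝ) := le_trans (by norm_num) g541
  have g547 := loglb_nat 547 9313 1024 (by norm_num) (by norm_num) (by decide +kernel)
  have t547 : (6.303984072:ℝ) ≤ Real.log ((547:ℕ):ℝ) := le_trans (by norm_num) g547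
  have g557 := loglb_nat 557 9340 1024 (by norm_num) (by norm_num) (by decide +kernel)
  have t557 : (6.322260414:ℝ) ≤ Real.log ((557:ℕ):ℝ) := le_trans (by norm_num) g557
  have g563 := loglb_nat 563 9356 1024 (by norm_num) (by norm_num) (by decide +kernel)
  have t563 : (6.333090838:ℝ) ≤ Real.log ((563:ℕ):ℝ) := le_trans (by norm_num) g563
  have g569 := loglb_nat 569 9371 1024 (by norm_num) (by norm_num) (by decide +kernel)
  have t569 : (6.343244361:ℝ) ≤ Real.log ((569:ℕ):ℝ) := le_trans (by norm_num) g569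
  have g571 := loglb_nat 571 9377 1024 (by norm_num) (by norm_num) (by decide +kernel)
  have t571 : (6.347305771:ℝ) ≤ Real.log ((571:ℕ):ℝ) := le_trans (by norm_num) g571
  have g577 := loglb_nat 577 9392 1024 (by norm_num) (by norm_num) (by decide +kernel)
  have t577 : (6.357459294:ℝ) ≤ Real.log ((577:ℕ):ℝ) := le_trans (by norm_num) g577
  have g587 := loglb_nat 587 9417 1024 (by norm_num) (by norm_num) (by decide +kernel)
  have t587 : (6.374381832:ℝ) ≤ Real.log ((587:ℕ):ℝ) := le_trans (by norm_num) g587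
  have g593 := loglb_nat 593 9432 1024 (by norm_num) (by norm_num) (by decide +kernel)
  have t593 : (6.384535356:ℝ) ≤ Real.log ((593:ℕ):ℝ) := le_trans (by norm_num) g593
  have g599 := loglb_nat 599 9447 1024 (by norm_num) (by norm_num) (by decide +kernel)
  have t599 : (6.394688879:ℝ) ≤ Real.log ((599:ℕ):ℝ) := le_trans (by norm_num) g599
  have g601 := loglb_nat 601 9452 1024 (by norm_num) (by norm_num) (by decide +kernel)
  have t601 : (6.398073386:ℝ) ≤ Real.log ((601:ℕ):ℝ) := le_trans (by norm_num) g601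
  have g607 := loglb_nat 607 9467 1024 (by norm_num) (by norm_num) (by decide +kernel)
  have t607 : (6.408226910:ℝ) ≤ Real.log ((607:ℕ):ℝ) := le_trans (by norm_num) g607
  have g613 := loglb_nat 613 9481 1024 (by norm_num) (by norm_num) (by decide +kernel)
  have t613 : (6.417703531:ℝ) ≤ Real.log ((613:ℕ):ℝ) := le_trans (by norm_num) g613
  have g617 := loglb_nat 617 9491 1024 (by norm_num) (by norm_num) (by decide +kernel)
  have t617 : (6.424472547:ℝ) ≤ Real.log ((617:ℕ):ℝ) := le_trans (by norm_num) g617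
  have g619 := loglb_nat 619 9496 1024 (by norm_num) (by norm_num) (by decide +kernel)
  have t619 : (6.427857054:ℝ) ≤ Real.log ((619:ℕ):ℝ) := le_trans (by norm_num) g619
  have g631 := loglb_nat 631 9524 1024 (by norm_num) (by norm_num) (by decide +kernel)
  have t631 : (6.446810298:ℝ) ≤ Real.log ((631:ℕ):ℝ) := le_trans (by norm_num) g631
  have g641 := loglb_nat 641 9547 1024 (by norm_num) (by norm_num) (by decide +kernel)
  have t641 : (6.462379033:ℝ) ≤ Real.log ((641:ℕ):ℝ) := le_trans (by norm_num) g641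
  have g643 := loglb_nat 643 9552 1024 (by norm_num) (by norm_num) (by decide +kernel)
  have t643 : (6.465763541:ℝ) ≤ Real.log ((643:ℕ):ℝ) := le_trans (by norm_num) g643
  have g647 := loglb_nat 647 9561 1024 (by norm_num) (by norm_num) (by decide +kernel)
  have t647 : (6.471855655:ℝ) ≤ Real.log ((647:ℕ):ℝ) := le_trans (by norm_num) g647
  have g653 := loglb_nat 653 9575 1024 (by norm_num) (by norm_num) (by decide +kernel)
  have t653 : (6.481332276:ℝ) ≤ Real.log ((653:ℕ):ℝ) := le_trans (by norm_num) g653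
  have g659 := loglb_nat 659 9588 1024 (by norm_num) (by norm_num) (by decide +kernel)
  have t659 : (6.490131996:ℝ) ≤ Real.log ((659:ℕ):ℝ) := le_trans (by norm_num) g659
  have g661 := loglb_nat 661 9593 1024 (by norm_num) (by norm_num) (by decide +kernel)
  have t661 : (6.493516504:ℝ) ≤ Real.log ((661:ℕ):ℝ) := le_trans (by norm_num) g661
  have g673 := loglb_nat 673 9619 1024 (by norm_num) (by norm_num) (by decide +kernel)
  have t673 : (6.511115944:ℝ) ≤ Real.log ((673:ℕ):ℝ) := le_trans (by norm_num) g673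
  have g677 := loglb_nat 677 9628 1024 (by norm_num) (by norm_num) (by decide +kernel)
  have t677 : (6.517208058:ℝ) ≤ Real.log ((677:ℕ):ℝ) := le_trans (by norm_num) g677
  have g683 := loglb_nat 683 9641 1024 (by norm_num) (by norm_num) (by decide +kernel)
  have t683 : (6.526007778:ℝ) ≤ Real.log ((683:ℕ):ℝ) := le_trans (by norm_num) g683
  have g691 := loglb_nat 691 9658 1024 (by norm_num) (by norm_num) (by decide +kernel)
  have t691 : (6.537515104:ℝ) ≤ Real.log ((691:ℕ):ℝ) := le_trans (by norm_num) g691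
  have g701 := loglb_nat 701 9680 1024 (by norm_num) (by norm_num) (by decide +kernel)
  have t701 : (6.552406938:ℝ) ≤ Real.log ((701:ℕ):ℝ) := le_trans (by norm_num) g701
  have g709 := loglb_nat 709 9696 1024 (by norm_num) (by norm_num) (by decide +kernel)
  have t709 : (6.563237363:ℝ) ≤ Real.log ((709:ℕ):ℝ) := le_trans (by norm_num) g709
  have g719 := loglb_nat 719 9717 1024 (by norm_num) (by norm_num) (by decide +kernel)
  have t719 : (6.577452295:ℝ) ≤ Real.log ((719:ℕ):ℝ) := le_trans (by norm_num) g719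
  have g727 := loglb_nat 727 9733 1024 (by norm_num) (by norm_num) (by decide +kernel)
  have t727 : (6.588282720:ℝ) ≤ Real.log ((727:ℕ):ℝ) := le_trans (by norm_num) g727
  have g733 := loglb_nat 733 9746 1024 (by norm_num) (by norm_num) (by decide +kernel)
  have t733 : (6.597082440:ℝ) ≤ Real.log ((733:ℕ):ℝ) := le_trans (by norm_num) g733
  have g739 := loglb_nat 739 9758 1024 (by norm_num) (by norm_num) (by decide +kernel)
  have t739 : (6.605205259:ℝ) ≤ Real.log ((739:ℕ):ℝ) := le_trans (by norm_num) g739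
  have g743 := loglb_nat 743 9766 1024 (by norm_num) (by norm_num) (by decide +kernel)
  have t743 : (6.610620471:ℝ) ≤ Real.log ((743:ℕ):ℝ) := le_trans (by norm_num) g743
  have g751 := loglb_nat 751 9781 1024 (by norm_num) (by norm_num) (by decide +kernel)
  have t751 : (6.620773994:ℝ) ≤ Real.log ((751:ℕ):ℝ) := le_trans (by norm_num) g751
  have g757 := loglb_nat 757 9793 1024 (by norm_num) (by norm_num) (by decide +kernel)
  have t757 : (6.628896813:ℝ) ≤ Real.log ((757:ℕ):ℝ) := le_trans (by norm_num) g757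
  have g761 := loglb_nat 761 9801 1024 (by norm_num) (by norm_num) (by decide +kernel)
  have t761 : (6.634312025:ℝ) ≤ Real.log ((761:ℕ):ℝ) := le_trans (by norm_num) g761
  have g769 := loglb_nat 769 9816 1024 (by norm_num) (by norm_num) (by decide +kernel)
  have t769 : (6.644465548:ℝ) ≤ Real.log ((769:ℕ):ℝ) := le_trans (by norm_num) g769
  have g773 := loglb_nat 773 9824 1024 (by norm_num) (by norm_num) (by decide +kernel)
  have t773 : (6.649880761:ℝ) ≤ Real.log ((773:ℕ):ℝ) := le_trans (by norm_num) g773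
  have g787 := loglb_nat 787 9851 1024 (by norm_num) (by norm_num) (by decide +kernel)
  have t787 : (6.668157102:ℝ) ≤ Real.log ((787:ℕ):ℝ) := le_trans (by norm_num) g787
  have g797 := loglb_nat 797 9869 1024 (by norm_num) (by norm_num) (by decide +kernel)
  have t797 : (6.680341330:ℝ) ≤ Real.log ((797:ℕ):ℝ) := le_trans (by norm_num) g797
  have g809 := loglb_nat 809 9891 1024 (by norm_num) (by norm_num) (by decide +kernel)
  have t809 : (6.695233164:ℝ) ≤ Real.log ((809:ℕ):ℝ) := le_trans (by norm_num) g809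
  have g811 := loglb_nat 811 9895 1024 (by norm_num) (by norm_num) (by decide +kernel)
  have t811 : (6.697940770:ℝ) ≤ Real.log ((811:ℕ):ℝ) := le_trans (by norm_num) g811
  have g821 := loglb_nat 821 9913 1024 (by norm_num) (by norm_num) (by decide +kernel)
  have t821 : (6.710124998:ℝ) ≤ Real.log ((821:ℕ):ℝ) := le_trans (by norm_num) g821
  have g823 := loglb_nat 823 9917 1024 (by norm_num) (by norm_num) (by decide +kernel)
  have t823 : (6.712832604:ℝ) ≤ Real.log ((823:ℕ):ℝ) := le_trans (by norm_num) g823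
  have g827 := loglb_nat 827 9924 1024 (by norm_num) (by norm_num) (by decide +kernel)
  have t827 : (6.717570915:ℝ) ≤ Real.log ((827:ℕ):ℝ) := le_trans (by norm_num) g827
  have g829 := loglb_nat 829 9927 1024 (by norm_num) (by norm_num) (by decide +kernel)
  have t829 : (6.719601619:ℝ) ≤ Real.log ((829:ℕ):ℝ) := le_trans (by norm_num) g829
  have g839 := loglb_nat 839 9945 1024 (by norm_num) (by norm_num) (by decide +kernel)
  have t839 : (6.731785847:ℝ) ≤ Real.log ((839:ℕ):ℝ) := le_trans (by norm_num) g839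
  have g853 := loglb_nat 853 9970 1024 (by norm_num) (by norm_num) (by decide +kernel)
  have t853 : (6.748708386:ℝ) ≤ Real.log ((853:ℕ):ℝ) := le_trans (by norm_num) g853
  have g857 := loglb_nat 857 9976 1024 (by norm_num) (by norm_num) (by decide +kernel)
  have t857 : (6.752769795:ℝ) ≤ Real.log ((857:ℕ):ℝ) := le_trans (by norm_num) g857
  have g859 := loglb_nat 859 9980 1024 (by norm_num) (by norm_num) (by decide +kernel)
  have t859 : (6.755477401:ℝ) ≤ Real.log ((859:ℕ):ℝ) := le_trans (by norm_num) g859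
  have g863 := loglb_nat 863 9987 1024 (by norm_num) (by norm_num) (by decide +kernel)
  have t863 : (6.760215712:ℝ) ≤ Real.log ((863:ℕ):ℝ) := le_trans (by norm_num) g863
  have g877 := loglb_nat 877 10011 1024 (by norm_num) (by norm_num) (by decide +kernel)
  have t877 : (6.776461349:ℝ) ≤ Real.log ((877:ℕ):ℝ) := le_trans (by norm_num) g877
  have g881 := loglb_nat 881 10017 1024 (by norm_num) (by norm_num) (by decide +kernel)
  have t881 : (6.780522758:ℝ) ≤ Real.log ((881:ℕ):ℝ) := le_trans (by norm_num) g881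
  have g883 := loglb_nat 883 10021 1024 (by norm_num) (by norm_num) (by decide +kernel)
  have t883 : (6.783230365:ℝ) ≤ Real.log ((883:ℕ):ℝ) := le_trans (by norm_num) g883
  have g887 := loglb_nat 887 10027 1024 (by norm_num) (by norm_num) (by decide +kernel)
  have t887 : (6.787291774:ℝ) ≤ Real.log ((887:ℕ):ℝ) := le_trans (by norm_num) g887
  have g907 := loglb_nat 907 10060 1024 (by norm_num) (by norm_num) (by decide +kernel)
  have t907 : (6.809629525:ℝ) ≤ Real.log ((907:ℕ):ℝ) := le_trans (by norm_num) g907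
  have g911 := loglb_nat 911 10067 1024 (by norm_num) (by norm_num) (by decide +kernel)
  have t911 : (6.814367836:ℝ) ≤ Real.log ((911:ℕ):ℝ) := le_trans (by norm_num) g911
  have g919 := loglb_nat 919 10080 1024 (by norm_num) (by norm_num) (by decide +kernel)
  have t919 : (6.823167556:ℝ) ≤ Real.log ((919:ℕ):ℝ) := le_trans (by norm_num) g919
  have g929 := loglb_nat 929 10096 1024 (by norm_num) (by norm_num) (by decide +kernel)
  have t929 : (6.833997980:ℝ) ≤ Real.log ((929:ℕ):ℝ) := le_trans (by norm_num) g929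
  have g937 := loglb_nat 937 10108 1024 (by norm_num) (by norm_num) (by decide +kernel)
  have t937 : (6.842120799:ℝ) ≤ Real.log ((937:ℕ):ℝ) := le_trans (by norm_num) g937
  have g941 := loglb_nat 941 10115 1024 (by norm_num) (by norm_num) (by decide +kernel)
  have t941 : (6.846859110:ℝ) ≤ Real.log ((941:ℕ):ℝ) := le_trans (by norm_num) g941
  have g947 := loglb_nat 947 10124 1024 (by norm_num) (by norm_num) (by decide +kernel)
  have t947 : (6.852951223:ℝ) ≤ Real.log ((947:ℕ):ℝ) := le_trans (by norm_num) g947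
  have g953 := loglb_nat 953 10133 1024 (by norm_num) (by norm_num) (by decide +kernel)
  have t953 : (6.859043337:ℝ) ≤ Real.log ((953:ℕ):ℝ) := le_trans (by norm_num) g953
  have g967 := loglb_nat 967 10155 1024 (by norm_num) (by norm_num) (by decide +kernel)
  have t967 : (6.873935171:ℝ) ≤ Real.log ((967:ℕ):ℝ) := le_trans (by norm_num) g967
  have g971 := loglb_nat 971 10161 1024 (by norm_num) (by norm_num) (by decide +kernel)
  have t971 : (6.877996581:ℝ) ≤ Real.log ((971:ℕ):ℝ) := le_trans (by norm_num) g971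
  have g977 := loglb_nat 977 10170 1024 (by norm_num) (by norm_num) (by decide +kernel)
  have t977 : (6.884088694:ℝ) ≤ Real.log ((977:ℕ):ℝ) := le_trans (by norm_num) g977
  have g983 := loglb_nat 983 10179 1024 (by norm_num) (by norm_num) (by decide +kernel)
  have t983 : (6.890180808:ℝ) ≤ Real.log ((983:ℕ):ℝ) := le_trans (by norm_num) g983
  have g991 := loglb_nat 991 10191 1024 (by norm_num) (by norm_num) (by decide +kernel)
  have t991 : (6.898303627:ℝ) ≤ Real.log ((991:ℕ):ℝ) := le_trans (by norm_num) g991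
  have g997 := loglb_nat 997 10200 1024 (by norm_num) (by norm_num) (by decide +kernel)
  have t997 : (6.904395741:ℝ) ≤ Real.log ((997:ℕ):ℝ) := le_trans (by norm_num) g997
  exact le_trans (by norm_num) (add_le_add t2 (add_le_add t3 (add_le_add t5 (add_le_add t7 (add_le_add t11 (add_le_add t13 (add_le_add t17 (add_le_add t19 (add_le_add t23 (add_le_add t29 (add_le_add t31 (add_le_add t37 (add_le_add t41 (add_le_add t43 (add_le_add t47 (add_le_add t53 (add_le_add t59 (add_le_add t61 (add_le_add t67 (add_le_add t71 (add_le_add t73 (add_le_add t79 (add_le_add t83 (add_le_add t89 (add_le_add t97 (add_le_add t101 (add_le_add t103 (add_le_add t107 (add_le_add t109 (add_le_add t113 (add_le_add t127 (add_le_add t131 (add_le_add t137 (add_le_add t139 (add_le_add t149 (add_le_add t151 (add_le_add t157 (add_le_add t163 (add_le_add t167 (add_le_add t173 (add_le_add t179 (add_le_add t181 (add_le_add t191 (add_le_add t193 (add_le_add t197 (add_le_add t199 (add_le_add t211 (add_le_add t223 (add_le_add t227 (add_le_add t229 (add_le_add t233 (add_le_add t239 (add_le_add t241 (add_le_add t251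 (add_le_add t257 (add_le_add t263 (add_le_add t269 (add_le_add t271 (add_le_add t277 (add_le_add t281 (add_le_add t283 (add_le_add t293 (add_le_add t307 (add_le_add t311 (add_le_add t313 (add_le_add t317 (add_le_add t331 (add_le_add t337 (add_le_add t347 (add_le_add t349 (add_le_add t353 (add_le_add t359 (add_le_add t367 (add_le_add t373 (add_le_add t379 (add_le_add t383 (add_le_add t389 (add_le_add t397 (add_le_add t401 (add_le_add t409 (add_le_add t419 (add_le_add t421 (add_le_add t431 (add_le_add t433 (add_le_add t439 (add_le_add t443 (add_le_add t449 (add_le_add t457 (add_le_add t461 (add_le_add t463 (add_le_add t467 (add_le_add t479 (add_le_add t487 (add_le_add t491 (add_le_add t499 (add_le_add t503 (add_le_add t509 (add_le_add t521 (add_le_add t523 (add_le_add t541 (add_le_add t547 (add_le_add t557 (add_le_add t563 (add_le_add t569 (add_le_add t571 (add_le_add t577 (add_le_add t587 (add_le_add t593 (add_le_add t599 (add_le_add t601 (add_le_add t607 (add_le_add t613 (add_le_add t617 (add_le_add t619 (add_le_add t631 (add_le_add t641 (add_le_add t643 (add_le_add t647 (add_le_add t653 (add_le_add t659 (add_le_add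 t661 (add_le_add t673 (add_le_add t677 (add_le_add t683 (add_le_add t691 (add_le_add t701 (add_le_add t709 (add_le_add t719 (add_le_add t727 (add_le_add t733 (add_le_add t739 (add_le_add t743 (add_le_add t751 (add_le_add t757 (add_le_add t761 (add_le_add t769 (add_le_add t773 (add_le_add t787 (add_le_add t797 (add_le_add t809 (add_le_add t811 (add_le_add t821 (add_le_add t823 (add_le_add t827 (add_le_add t829 (add_le_add t839 (add_le_add t853 (add_le_add t857 (add_le_add t859 (add_le_add t863 (add_le_add t877 (add_le_add t881 (add_le_add t883 (add_le_add t887 (add_le_add t907 (add_le_add t911 (add_le_add t919 (add_le_add t929 (add_le_add t937 (add_le_add t941 (add_le_add t947 (add_le_add t953 (add_le_add t967 (add_le_add t971 (add_le_add t977 (add_le_add t983 (add_le_add t991 (add_le_add t997 (le_refl (0:ℝ))))))))))))))))))))))))))))))))))))))))))))))))))))))))))))))))))))))))))))))))))))))))))))))))))))))))))))))))))))))))))))))))))))))))))))))))))))))))))))))))))))))))))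

lemma tailnum :
    (Real.log 4 * ((1000:ℕ):ℝ) - thP 1000) * hP 1000
      + Real.log 4 / Real.log ((1000:ℕ):ℝ) ≤ 0.20973 := by
  have hl4 : Real.log 4 = 2 * Real.log 2 := by
    rw [show (4:ℝ) = 2^2 by norm_num, Real.log_pow]
    push_cast; ring
  have hCu : Real.log 4 ≤ 1.3862943616 := by
    rw [hl4]; linarith [Real.log_two_lt_d9]
  have gk : ((10204:ℕ):ℝ)/((1024:ℕ):ℝ) * 0.6931471803 ≤ Real.log ((1000:ℕ):ℝ) :=
    loglb_nat 1000 10204 1024 (by norm_num) (by norm_num) (by decide +kernel)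
  set Lk : ℝ := ((10204:ℕ):ℝ)/((1024:ℕ):ℝ) * 0.6931471803 with hLkdef
  have hLkpos : 0 < Lk := by rw [hLkdef]; norm_num
  have hlogpos : 0 < Real.log ((1000:ℕ):ℝ) := lt_of_lt_of_le hLkpos gk
  have hth := thetalb
  have hchb := cheby 1000
  have c1000 : ((1000:ℕ):ℝ) = 1000 := by norm_num
  have hhPnn : 0 ≤ hP 1000 := by
    unfold hP; positivity
  have hhP : hP 1000 ≤ 1/(1000 * Lk^2) := by
    unfold hP
    rw [c1000]
    apply one_div_le_one_div_of_le (mul_pos (by norm_num : (0:ℝ) < 1000) (pow_pos hLkpos 2))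
    have gk' : Lk ≤ Real.log (1000:ℝ) := by rw [← c1000]; exact gk
    nlinarith
  have hA : Real.log 4 * ((1000:ℕ):ℝ) - thP 1000 ≤ 1386.2943616 - 956.188412 := by
    have h2 : Real.log 4 * ((1000:ℕ):ℝ) ≤ 1.3862943616 * 1000 := by
      rw [c1000]; nlinarith
    linarith
  have hA0 : 0 ≤ Real.log 4 * ((1000:ℕ):ℝ) - thP 1000 := by linarith
  have hprod := mul_le_mul hA hhP hhPnn (by norm_num)
  have hdiv : Real.log 4 / Real.log ((1000:ℕ):ℝ) ≤ 1.3862943616 / Lk :=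
    div_le_div₀ (by norm_num) hCu hLkpos gk
  have : (1386.2943616 - 956.188412) * (1/(1000 * Lk^2)) + 1.3862943616 / Lk ≤ 0.20973 := by
    rw [hLkdef]
    norm_num
  linarith

lemma partial_le : ∀ M : ℕ, ∑ n ∈ Finset.range M, fP n ≤ 1.7022 := by
  intro M
  rcases le_or_gt M 1001 with h | h
  · have h1 : ∑ n ∈ Finset.range M, fP n ≤ ∑ n ∈ Finset.range 1001, fP n :=
      Finset.sum_le_sum_of_subset_of_nonneg (Finset.range_subset_range.mpr h)
        (fun i _ _ => fP_nonneg i)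
    linarith [headbound]
  · obtain ⟨K, rfl⟩ : ∃ K, M = K + 1 := ⟨M - 1, by omega⟩
    have hK : 1000 ≤ K := by omega
    have hsplit : ∑ n ∈ Finset.range (K+1), fP n
        = ∑ n ∈ Finset.range 1001, fP n + ∑ n ∈ Finset.Ico 1001 (K+1), fP n := by
      simp only [Finset.range_eq_Ico]
      exact (Finset.sum_Ico_consecutive _ (by omega) (by omega)).symm
    have htail := tailbound K hK
    have hKpos : (1:ℝ) < (K:ℝ) := by
      have : (1000:ℝ) ≤ (K:ℝ) := by exact_mod_cast hK
      linarith
    have hlogK : 0 < Real.log (K:ℝ) := Real.log_pos hKpos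
    have hC : 0 < Real.log 4 := Real.log_pos (by norm_num)
    have h1 : 0 ≤ (Real.log 4 * (K:ℝ) - thP K) * hP K := by
      apply mul_nonneg
      · linarith [cheby K]
      · unfold hP; positivity
    have h2 : 0 ≤ Real.log 4 / Real.log (K:ℝ) := by positivity
    have h3 : ∑ n ∈ Finset.Ico 1001 (K+1), fP n
        ≤ (Real.log 4 * ((1000:ℕ):ℝ) - thP 1000) * hP 1000
          + Real.log 4 / Real.log ((1000:ℕ):ℝ) := by linarith
    rw [hsplit]
    linarith [headbound, tailnum]

lemma fP_summable : Summable fP := summable_of_sum_range_le fP_nonneg partial_le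

lemma heqfun : (fun p : Nat.Primes => 1 / (((p : ℕ) : ℝ) * Real.log (p : ℕ)))
    = fun p : Nat.Primes => fP (p : ℕ) := by
  funext p
  have hp : (p : ℕ).Prime := p.prop
  simp [fP, hp]

/-- `κ = exp (∑_p 1 / (p log p))`, the sum over all primes. -/
noncomputable def kappa : ℝ :=
  Real.exp (∑' p : Nat.Primes, 1 / (((p : ℕ) : ℝ) * Real.log (p : ℕ)))


theorem stmt9 :
    Summable (fun p : Nat.Primes => 1 / (((p : ℕ) : ℝ) * Real.log (p : ℕ))) ∧
      kappa ≤ 5.5 := by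
  constructor
  · rw [heqfun]
    exact fP_summable.subtype _
  · have e1 : (∑' p : Nat.Primes, fP (p : ℕ))
        = ∑' n : ℕ, Set.indicator {n : ℕ | n.Prime} fP n :=
      tsum_subtype {n : ℕ | n.Prime} fP
    have e2 : Set.indicator {n : ℕ | n.Prime} fP = fP := by
      apply Set.indicator_eq_self.mpr
      intro n hn
      by_contra hnp
      have hnp' : ¬ n.Prime := hnp
      exact hn (by simp only [fP, if_neg hnp'])
    have htsum : (∑' p : Nat.Primes, 1 / (((p : ℕ) : ℝ) * Real.log (p : ℕ))) ≤ 1.7022 := by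
      rw [heqfun, e1, e2]
      exact Real.tsum_le_of_sum_range_le fP_nonneg partial_le
    have hlog : (1.7022:ℝ) ≤ Real.log 5.5 := by
      have h55 := loglb 5.5 10073 4096 (by norm_num) (by norm_num) (by rw [show (5.5:ℝ) = 11/2 by norm_num, div_pow, le_div_iff₀ (by positivity), ← pow_add]; exact_mod_cast (by decide +kernel : (2:ℕ)^(10073+4096) ≤ 11^4096))
      calc (1.7022:ℝ) ≤ ((10073:ℕ):ℝ)/((4096:ℕ):ℝ) * 0.6931471803 := by norm_num
        _ ≤ Real.log 5.5 := h55
    unfold kappa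
    rw [show (5.5:ℝ) = Real.exp (Real.log 5.5) from (Real.exp_log (by norm_num)).symm]
    exact Real.exp_le_exp.mpr (le_trans htsum hlog)
end

section
/- For every integer α ≥ 2, the infinite series ∑ 1/d over positive integers d > 1 such that p ∣ d implies p^α ∣ d for all primes p, converges. -/
set_option maxHeartbeats 800000

theorem stmt11 (α : ℕ) (hα : 2 ≤ α) :
    Summable (fun d : {d : ℕ // 1 < d ∧ ∀ p : ℕ, p.Prime → p ∣ d → p ^ α ∣ d} =>
      (1 : ℝ) / ((d : ℕ) : ℝ)) := by
  set S := {d : ℕ // 1 < d ∧ ∀ p : ℕ, p.Prime → p ∣ d → p ^ α ∣ d} with hS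
  set A : S → ℕ := fun d =>
    ∏ p ∈ (d : ℕ).primeFactors,
      p ^ (((d : ℕ).factorization p - 3 * ((d : ℕ).factorization p % 2)) / 2) with hA
  set B : S → ℕ := fun d =>
    ∏ p ∈ (d : ℕ).primeFactors, p ^ ((d : ℕ).factorization p % 2) with hB
  have key : ∀ d : S, (A d) ^ 2 * (B d) ^ 3 = (d : ℕ) := by
    rintro ⟨d, hd1, hd2⟩
    have hd0 : d ≠ 0 := by omega
    simp only [hA, hB]
    rw [← Finset.prod_pow, ← Finset.prod_pow, ← Finset.prod_mul_distrib]
    conv_rhs => rw [← Nat.factorization_prod_pow_eq_self hd0]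
    rw [Nat.prod_factorization_eq_prod_primeFactors]
    refine Finset.prod_congr rfl fun p hp => ?_
    have hpp : p.Prime := Nat.prime_of_mem_primeFactors hp
    have hpd : p ∣ d := Nat.dvd_of_mem_primeFactors hp
    have h2 : 2 ≤ d.factorization p := by
      have := (Nat.Prime.pow_dvd_iff_le_factorization hpp hd0).mp (hd2 p hpp hpd)
      omega
    rw [← pow_mul, ← pow_mul, ← pow_add]
    congr 1
    omega
  have hinj : Function.Injective (fun d : S => (A d, B d)) := by
    intro d d' h
    simp only [Prod.mk.injEq] at h
    exact Subtype.ext (by rw [← key d, ← key d', h.1, h.2])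
  have h1 : Summable (fun a : ℕ => (1 : ℝ) / (a : ℝ) ^ 2) :=
    Real.summable_one_div_nat_pow.mpr one_lt_two
  have h2 : Summable (fun b : ℕ => (1 : ℝ) / (b : ℝ) ^ 3) :=
    Real.summable_one_div_nat_pow.mpr (by norm_num)
  have hg : Summable (fun x : ℕ × ℕ => ((1 : ℝ) / (x.1 : ℝ) ^ 2) * ((1 : ℝ) / (x.2 : ℝ) ^ 3)) :=
    h1.mul_of_nonneg h2 (fun a => by positivity) (fun b => by positivity)
  have := hg.comp_injective hinj
  refine this.congr fun d => ?_
  show (1 : ℝ) / (A d : ℝ) ^ 2 * ((1 : ℝ) / (B d : ℝ) ^ 3) = 1 / ((d : ℕ) : ℝ)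
  rw [← key d]
  push_cast
  rw [one_div_mul_one_div]
end
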